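/- arXiv:1211.0949 — 3 statements merged into one kernel-verified Lean document; each statement's English description precedes it below -/
import Mathlib

section
/- There exists a constant c = c(n) such that for every smooth regular curve f : [0,1] → ℝⁿ, every smooth normal vector field φ along f, and every ε ∈ (0,1): ‖∇ₛφ‖₂ ≤ c(ε‖φ‖_{2,2} + ε⁻¹‖φ‖₂), where the scale-invariant norms are ‖∇ₛⁱφ‖₂ = L[f]^{i+1/2}(∫_I |∇ₛⁱφ|² ds)^{1/2} and ‖φ‖_{2,2} = ‖φ‖₂ + ‖∇ₛφ‖₂ + ‖∇ₛ²φ‖₂. -/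
open scoped RealInnerProductSpace
open MeasureTheory
open Set

noncomputable section

abbrev En (n : ℕ) := EuclideanSpace ℝ (Fin n)

variable {n : ℕ}

/-- Arc-length derivative along `f`. -/
def aD (f g : ℝ → En n) : ℝ → En n := fun x => ‖deriv f x‖⁻¹ • deriv g x

/-- Iterated arc-length derivative. -/
def aDIter (f : ℝ → En n) : ℕ → (ℝ → En n) → ℝ → En n
  | 0, g => g
  | k + 1, g => aD f (aDIter f k g)

/-- Unit tangent vector. -/
def tang (f : ℝ → En n) : ℝ → En n := aD f f

/-- Curvature vector. -/
def curv (f : ℝ → En n) : ℝ → En n := aD f (tang f)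

/-- Normal component of the arc-length derivative of a vector field along `f`. -/
def nS (f g : ℝ → En n) : ℝ → En n :=
  fun x => aD f g x - ⟪aD f g x, tang f x⟫ • tang f x

/-- Iterated normal arc-length derivative. -/
def nSIter (f : ℝ → En n) : ℕ → (ℝ → En n) → ℝ → En n
  | 0, g => g
  | k + 1, g => nS f (nSIter f k g)

/-- Arc-length derivative of a scalar field along `f`. -/
def aDS (f : ℝ → En n) (g : ℝ → ℝ) : ℝ → ℝ := fun x => ‖deriv f x‖⁻¹ * deriv g x

/-- Length of the curve. -/
def len (f : ℝ → En n) : ℝ := ∫ x in (0:ℝ)..1, ‖deriv f x‖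

/-- Willmore–Helfrich energy. -/
def WH (lam : ℝ) (ζ : En n) (f : ℝ → En n) : ℝ :=
  (∫ x in (0:ℝ)..1, ((1/2) * ‖curv f x‖ ^ 2 - ⟪curv f x, ζ⟫) * ‖deriv f x‖) + lam * len f

/-- Time derivative of a time dependent field. -/
def pT (g : ℝ → ℝ → En n) : ℝ → ℝ → En n := fun t x => deriv (fun s => g s x) t

/-- Normal component (w.r.t. the curve `f t`) of the time derivative. -/
def nT (f g : ℝ → ℝ → En n) : ℝ → ℝ → En n :=
  fun t x => pT g t x - ⟪pT g t x, tang (f t) x⟫ • tang (f t) x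

/-- Normal arc-length derivative of a time dependent field. -/
def nSF (f g : ℝ → ℝ → En n) : ℝ → ℝ → En n := fun t => nS (f t) (g t)

/-- Tangential component of the velocity. -/
def tanComp (f : ℝ → ℝ → En n) : ℝ → ℝ → ℝ := fun t x => ⟪pT f t x, tang (f t) x⟫

/-- Normal velocity. -/
def normVel (f : ℝ → ℝ → En n) : ℝ → ℝ → En n :=
  fun t x => pT f t x - tanComp f t x • tang (f t) x

/-- Scale invariant `Lᵖ` norm of the `i`-th normal derivative of `g` along `f`. -/
def sN (f : ℝ → En n) (p : ℝ) (i : ℕ) (g : ℝ → En n) : ℝ :=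
  len f ^ ((i : ℝ) + 1 - 1/p) * (∫ x in (0:ℝ)..1, ‖nSIter f i g x‖ ^ p * ‖deriv f x‖) ^ (1/p)

/-- Scale invariant Sobolev-type norm. -/
def sNk (f : ℝ → En n) (k : ℕ) (g : ℝ → En n) : ℝ :=
  ∑ i ∈ Finset.range (k + 1), sN f 2 i g

lemma ii_of_contOn {h : ℝ → ℝ} (hh : ContinuousOn h (Icc 0 1)) :
    IntervalIntegrable h volume 0 1 :=
  ContinuousOn.intervalIntegrable (by rw [uIcc_of_le (zero_le_one : (0:ℝ) ≤ 1)]; exact hh)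

lemma trace_bound (v m w : ℝ → ℝ)
    (hv : ∀ x ∈ Set.Icc (0:ℝ) 1, HasDerivAt v (m x) x)
    (hm : ContinuousOn m (Set.Icc 0 1))
    (hw : Continuous w) (hw0 : ∀ x, 0 ≤ w x)
    (e : ℝ) (he : e ∈ Set.Icc (0:ℝ) 1) :
    v e * (∫ x in (0:ℝ)..1, w x) ≤
      (∫ x in (0:ℝ)..1, v x * w x) + (∫ x in (0:ℝ)..1, |m x|) * (∫ x in (0:ℝ)..1, w x) := by
  have hvc : ContinuousOn v (Icc 0 1) := fun x hx => ((hv x hx).continuousAt).continuousWithinAt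
  have hmi : IntervalIntegrable (fun x => |m x|) volume 0 1 := ii_of_contOn hm.abs
  have habs : ∀ x ∈ Icc (0:ℝ) 1, (0:ℝ) ≤ |m x| := fun x _ => abs_nonneg _
  set M := ∫ x in (0:ℝ)..1, |m x| with hM
  have step : ∀ y ∈ Icc (0:ℝ) 1, v e ≤ v y + M := by
    intro y hy
    have hsub : uIcc y e ⊆ Icc (0:ℝ) 1 := by
      rw [← uIcc_of_le (zero_le_one : (0:ℝ) ≤ 1)]
      exact uIcc_subset_uIcc (by rw [uIcc_of_le zero_le_one]; exact hy)
        (by rw [uIcc_of_le zero_le_one]; exact he)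
    have hftc : ∫ x in y..e, m x = v e - v y :=
      intervalIntegral.integral_eq_sub_of_hasDerivAt (fun x hx => hv x (hsub hx))
        ((hm.mono hsub).intervalIntegrable)
    have h1 : v e - v y ≤ |∫ x in y..e, m x| := by
      rw [hftc]; exact le_abs_self _
    have h2 : |∫ x in y..e, m x| ≤ |∫ x in y..e, ‖m x‖| := by
      simpa [Real.norm_eq_abs] using
        intervalIntegral.norm_integral_le_abs_integral_norm (f := m) (a := y) (b := e)
    have h3 : |∫ x in y..e, ‖m x‖| ≤ M := by
      have hmi' : IntervalIntegrable (fun x => ‖m x‖) volume 0 1 := by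
        simpa [Real.norm_eq_abs] using hmi
      have hM' : M = ∫ x in (0:ℝ)..1, ‖m x‖ := by
        rw [hM]; simp [Real.norm_eq_abs]
      rcases le_total y e with hye | hey
      · have hnn : 0 ≤ ∫ x in y..e, ‖m x‖ :=
          intervalIntegral.integral_nonneg hye (fun x _ => norm_nonneg _)
        rw [abs_of_nonneg hnn, hM']
        exact intervalIntegral.integral_mono_interval hy.1 hye he.2
          (Filter.Eventually.of_forall (fun x => norm_nonneg _)) hmi'
      · have hnn : 0 ≤ ∫ x in e..y, ‖m x‖ :=
          intervalIntegral.integral_nonneg hey (fun x _ => norm_nonneg _)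
        rw [intervalIntegral.integral_symm e y, abs_neg, abs_of_nonneg hnn, hM']
        exact intervalIntegral.integral_mono_interval he.1 hey hy.2
          (Filter.Eventually.of_forall (fun x => norm_nonneg _)) hmi'
    linarith
  have hInt1 : IntervalIntegrable (fun y => v e * w y) volume 0 1 :=
    ii_of_contOn (continuousOn_const.mul hw.continuousOn)
  have hInt2 : IntervalIntegrable (fun y => (v y + M) * w y) volume 0 1 :=
    ii_of_contOn (((hvc.add continuousOn_const)).mul hw.continuousOn)
  have hmono := intervalIntegral.integral_mono_on zero_le_one hInt1 hInt2
    (fun y hy => mul_le_mul_of_nonneg_right (step y hy) (hw0 y))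
  have hL : (∫ y in (0:ℝ)..1, v e * w y) = v e * ∫ y in (0:ℝ)..1, w y :=
    intervalIntegral.integral_const_mul _ _
  have hR : (∫ y in (0:ℝ)..1, (v y + M) * w y) =
      (∫ y in (0:ℝ)..1, v y * w y) + M * ∫ y in (0:ℝ)..1, w y := by
    have : (fun y => (v y + M) * w y) = fun y => v y * w y + M * w y := by funext y; ring
    rw [this, intervalIntegral.integral_add (ii_of_contOn (hvc.mul hw.continuousOn) :
        IntervalIntegrable (fun y => v y * w y) volume 0 1)
      (ii_of_contOn (continuousOn_const.mul hw.continuousOn) :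
        IntervalIntegrable (fun y => M * w y) volume 0 1), intervalIntegral.integral_const_mul]
  rw [hL, hR] at hmono
  exact hmono

/-- Cauchy–Schwarz for interval integrals on [0,1]. -/
lemma cs_int (F G : ℝ → ℝ) (hF : ContinuousOn F (Icc 0 1)) (hG : ContinuousOn G (Icc 0 1)) :
    (∫ x in (0:ℝ)..1, F x * G x) ^ 2 ≤
      (∫ x in (0:ℝ)..1, F x ^ 2) * (∫ x in (0:ℝ)..1, G x ^ 2) := by
  have hFi : IntervalIntegrable (fun x => F x ^ 2) volume 0 1 :=
    ii_of_contOn ((hF.mul hF).congr (fun x hx => by simp only [Pi.mul_apply]; ring))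
  have hGi : IntervalIntegrable (fun x => G x ^ 2) volume 0 1 :=
    ii_of_contOn ((hG.mul hG).congr (fun x hx => by simp only [Pi.mul_apply]; ring))
  have hFGi : IntervalIntegrable (fun x => F x * G x) volume 0 1 :=
    ii_of_contOn (hF.mul hG)
  have key : ∀ t : ℝ, 0 ≤ (∫ x in (0:ℝ)..1, F x ^ 2) * (t * t) +
      (2 * ∫ x in (0:ℝ)..1, F x * G x) * t + (∫ x in (0:ℝ)..1, G x ^ 2) := by
    intro t
    have h0 : 0 ≤ ∫ x in (0:ℝ)..1, (t * F x + G x) ^ 2 :=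
      intervalIntegral.integral_nonneg zero_le_one (fun x _ => sq_nonneg _)
    have hexp : (∫ x in (0:ℝ)..1, (t * F x + G x) ^ 2) =
        (∫ x in (0:ℝ)..1, F x ^ 2) * (t * t) +
        (2 * ∫ x in (0:ℝ)..1, F x * G x) * t + (∫ x in (0:ℝ)..1, G x ^ 2) := by
      have : (fun x => (t * F x + G x) ^ 2) =
          (fun x => (t*t) * F x ^ 2 + ((2*t) * (F x * G x) + G x ^ 2)) := by
        funext x; ring
      rw [this, intervalIntegral.integral_add (hFi.const_mul _)
        ((hFGi.const_mul _).add hGi), intervalIntegral.integral_add (hFGi.const_mul _) hGi,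
        intervalIntegral.integral_const_mul, intervalIntegral.integral_const_mul]
      ring
    linarith [hexp ▸ h0]
  have hd := discrim_le_zero key
  rw [discrim] at hd
  nlinarith [hd]

lemma cs_wint {E : Type*} [NormedAddCommGroup E] (a b : ℝ → E) (w : ℝ → ℝ)
    (ha : ContinuousOn a (Icc 0 1)) (hb : ContinuousOn b (Icc 0 1))
    (hw : Continuous w) (hw0 : ∀ x, 0 ≤ w x) :
    (∫ x in (0:ℝ)..1, ‖a x‖ * ‖b x‖ * w x) ≤
      Real.sqrt (∫ x in (0:ℝ)..1, ‖a x‖^2 * w x) *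
        Real.sqrt (∫ x in (0:ℝ)..1, ‖b x‖^2 * w x) := by
  have key := cs_int (fun x => ‖a x‖ * Real.sqrt (w x)) (fun x => ‖b x‖ * Real.sqrt (w x))
    (ha.norm.mul (hw.continuousOn.sqrt)) (hb.norm.mul (hw.continuousOn.sqrt))
  have e1 : (fun x => (‖a x‖ * Real.sqrt (w x)) * (‖b x‖ * Real.sqrt (w x))) =
      fun x => ‖a x‖ * ‖b x‖ * w x := by
    funext x
    rw [show (‖a x‖ * Real.sqrt (w x)) * (‖b x‖ * Real.sqrt (w x)) =
      ‖a x‖ * ‖b x‖ * (Real.sqrt (w x) * Real.sqrt (w x)) by ring,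
      Real.mul_self_sqrt (hw0 x)]
  have e2 : (fun x => (‖a x‖ * Real.sqrt (w x))^2) = fun x => ‖a x‖^2 * w x := by
    funext x
    rw [mul_pow, Real.sq_sqrt (hw0 x)]
  have e3 : (fun x => (‖b x‖ * Real.sqrt (w x))^2) = fun x => ‖b x‖^2 * w x := by
    funext x
    rw [mul_pow, Real.sq_sqrt (hw0 x)]
  simp only [e1, e2, e3] at key
  have hX : 0 ≤ ∫ x in (0:ℝ)..1, ‖a x‖ * ‖b x‖ * w x :=
    intervalIntegral.integral_nonneg zero_le_one
      (fun x _ => mul_nonneg (mul_nonneg (norm_nonneg _) (norm_nonneg _)) (hw0 x))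
  have hY : 0 ≤ ∫ x in (0:ℝ)..1, ‖a x‖^2 * w x :=
    intervalIntegral.integral_nonneg zero_le_one
      (fun x _ => mul_nonneg (sq_nonneg _) (hw0 x))
  calc (∫ x in (0:ℝ)..1, ‖a x‖ * ‖b x‖ * w x)
      = Real.sqrt ((∫ x in (0:ℝ)..1, ‖a x‖ * ‖b x‖ * w x)^2) := (Real.sqrt_sq hX).symm
    _ ≤ Real.sqrt ((∫ x in (0:ℝ)..1, ‖a x‖^2 * w x) * ∫ x in (0:ℝ)..1, ‖b x‖^2 * w x) :=
        Real.sqrt_le_sqrt key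
    _ = _ := Real.sqrt_mul hY _


lemma interp_alg {A B C l : ℝ} (hA : 0 ≤ A) (hB : 0 ≤ B) (hC : 0 ≤ C) (hl : 0 < l)
    (h : ∀ t : ℝ, 0 < t → B^2 ≤ A*C + t*l*A^2 + 2*t*A*B + t⁻¹*l*B^2 + 2*t⁻¹*B*C) :
    B^2 ≤ 300*(A*C + l^2*A^2) := by
  rcases eq_or_lt_of_le hA with hA0 | hApos
  · -- A = 0
    rcases eq_or_lt_of_le hB with hB0 | hBpos
    · nlinarith
    · exfalso
      set t : ℝ := 2*(l*B^2 + 2*B*C)/B^2 with ht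
      have htpos : 0 < t := by positivity
      have h2 := h t htpos
      rw [← hA0] at h2
      have hti : t⁻¹ = B^2/(2*(l*B^2+2*B*C)) := by
        rw [ht, inv_div]
      have hden : 0 < l*B^2 + 2*B*C := by positivity
      rw [hti] at h2
      have h4 : B^2/(2*(l*B^2+2*B*C))*(l*B^2+2*B*C) = B^2/2 := by
        field_simp
      nlinarith [h2, h4]
  · -- A > 0
    have harg : 0 < 16*l^2 + C/A := by positivity
    obtain ⟨t, htpos, ht2⟩ : ∃ t : ℝ, 0 < t ∧ t^2 = 16*l^2 + C/A :=
      ⟨Real.sqrt _, Real.sqrt_pos.mpr harg, Real.sq_sqrt harg.le⟩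
    have ht2A : t^2 * A = 16*l^2*A + C := by
      rw [ht2]; field_simp
    have htl : 4*l ≤ t := by
      have hgeq : 16*l^2 ≤ t^2 := by
        rw [ht2]; nlinarith [div_nonneg hC hApos.le]
      nlinarith [hgeq, htpos, hl]
    have h2 := h t htpos
    have htinv : t⁻¹ ≤ (4*l)⁻¹ := inv_anti₀ (by positivity) htl
    have e3 : t⁻¹*l*B^2 ≤ (1/4)*B^2 := by
      have hq : t⁻¹*l ≤ 1/4 := by
        calc t⁻¹*l ≤ (4*l)⁻¹*l := mul_le_mul_of_nonneg_right htinv hl.le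
          _ = 1/4 := by field_simp
      nlinarith [sq_nonneg B]
    have e2 : t^2*A^2 = 16*l^2*A^2 + A*C := by nlinarith [ht2A]
    have e1 : t*l*A^2 ≤ (16*l^2*A^2 + A*C + l^2*A^2)/2 := by
      have p1 : t*l*A^2 ≤ (t^2*A^2 + l^2*A^2)/2 := by
        clear h h2 htinv ht2A ht2 e2 e3
        nlinarith [sq_nonneg (t*A - l*A)]
      linarith [p1, e2.le]
    have eT2 : 2*t*A*B ≤ (1/4)*B^2 + (64*l^2*A^2 + 4*(A*C)) := by
      have p1 : 2*t*A*B ≤ (1/4)*B^2 + 4*(t^2*A^2) := by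
        clear h h2 htinv ht2A ht2 e2 e3 e1
        nlinarith [sq_nonneg (B - 4*t*A)]
      linarith [p1, e2.le]
    have hCle : C ≤ t^2*A := by
      clear h h2 htinv e2 e3 e1 eT2
      nlinarith [ht2A, mul_nonneg (mul_nonneg hl.le hl.le) hA]
    have e5 : t⁻¹*t⁻¹*C^2 ≤ A*C := by
      have h6 : C^2 ≤ t^2*(A*C) := by
        clear h h2 htinv e2 e3 e1 eT2 ht2 ht2A
        nlinarith [hCle]
      have h7 := mul_le_mul_of_nonneg_left h6 (by positivity : (0:ℝ) ≤ t⁻¹*t⁻¹)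
      calc t⁻¹*t⁻¹*C^2 ≤ t⁻¹*t⁻¹*(t^2*(A*C)) := h7
        _ = A*C := by
          field_simp
    have eT4 : 2*t⁻¹*B*C ≤ (1/4)*B^2 + 4*(A*C) := by
      clear h h2 htinv e2 e3 e1 eT2 ht2 ht2A hCle
      nlinarith [sq_nonneg (B - 4*t⁻¹*C), e5, sq_nonneg (t⁻¹*C)]
    have hACn : 0 ≤ A*C := mul_nonneg hA hC
    have hlA : 0 ≤ l^2*A^2 := by positivity
    linarith [h2, e1, eT2, e3, eT4]


lemma young_t {t : ℝ} (ht : 0 < t) (a b : ℝ) : a * b ≤ (t * a^2 + t⁻¹ * b^2) / 2 := by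
  have h2 : 2 * (t * a) * b ≤ (t * a)^2 + b^2 := by nlinarith [sq_nonneg (t * a - b)]
  have h3 := mul_le_mul_of_nonneg_left h2 (inv_pos.mpr ht).le
  have e1 : t⁻¹ * (2 * (t * a) * b) = 2 * (a * b) := by field_simp
  have e2 : t⁻¹ * ((t * a)^2 + b^2) = t * a^2 + t⁻¹ * b^2 := by field_simp
  rw [e1, e2] at h3
  linarith

set_option maxHeartbeats 1000000 in
/-- Interpolation inequality: `‖∇ₛφ‖₂ ≤ c(ε‖φ‖₂,₂ + ε⁻¹‖φ‖₂)` for normal fields `φ`,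
with a constant `c = c(n)`. -/
theorem interpolation_first_derivative (n : ℕ) (hn : 2 ≤ n) :
    ∃ c : ℝ, 0 < c ∧
      ∀ f φ : ℝ → En n, ContDiff ℝ (⊤ : ℕ∞) f → ContDiff ℝ (⊤ : ℕ∞) φ →
        (∀ x ∈ Set.Icc (0:ℝ) 1, deriv f x ≠ 0) →
        (∀ x ∈ Set.Icc (0:ℝ) 1, ⟪φ x, tang f x⟫ = 0) →
        ∀ ε ∈ Set.Ioo (0:ℝ) 1,
          sN f 2 1 φ ≤ c * (ε * sNk f 2 φ + ε⁻¹ * sN f 2 0 φ) := by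
  refine ⟨13, by norm_num, ?_⟩
  intro f φ hf hφ hreg hnorm ε hε
  -- basic objects
  set w : ℝ → ℝ := fun x => ‖deriv f x‖ with hwdef
  have hfd : ContDiff ℝ (⊤ : ℕ∞) (deriv f) := by
    exact (contDiff_infty_iff_deriv.mp hf).2
  have hφd : ContDiff ℝ (⊤ : ℕ∞) (deriv φ) := by
    exact (contDiff_infty_iff_deriv.mp hφ).2
  have hwcont : Continuous w := hfd.continuous.norm
  set U : Set ℝ := {x | deriv f x ≠ 0} with hUdef
  have hUopen : IsOpen U := isOpen_compl_singleton.preimage hfd.continuous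
  have hIccU : Icc (0:ℝ) 1 ⊆ U := fun x hx => hreg x hx
  have hwne : ∀ x ∈ U, w x ≠ 0 := fun x hx => norm_ne_zero_iff.mpr hx
  have hwpos : ∀ x ∈ U, 0 < w x := fun x hx => norm_pos_iff.mpr hx
  set τ : ℝ → En n := tang f with hτdef
  set ψ : ℝ → En n := nS f φ with hψdef
  set χ : ℝ → En n := nS f ψ with hχdef
  -- smoothness on U
  have hwU : ContDiffOn ℝ (⊤ : ℕ∞) w U := by
    exact hfd.contDiffOn.norm ℝ (fun x hx => hx)
  have haD : ∀ g : ℝ → En n, ContDiff ℝ (⊤ : ℕ∞) (deriv g) →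
      ContDiffOn ℝ (⊤ : ℕ∞) (aD f g) U := by
    intro g hg
    exact (hwU.inv hwne).smul hg.contDiffOn
  have hτU : ContDiffOn ℝ (⊤ : ℕ∞) τ U := haD f hfd
  have hnSU : ∀ g : ℝ → En n, ContDiff ℝ (⊤ : ℕ∞) (deriv g) →
      ContDiffOn ℝ (⊤ : ℕ∞) (nS f g) U := by
    intro g hg
    exact (haD g hg).sub (((haD g hg).inner ℝ hτU).smul hτU)
  have hψU : ContDiffOn ℝ (⊤ : ℕ∞) ψ U := hnSU φ hφd
  have hdψU : ContinuousOn (deriv ψ) U := by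
    exact hψU.continuousOn_deriv_of_isOpen hUopen (by exact_mod_cast le_top)
  have hψdiff : ∀ x ∈ U, DifferentiableAt ℝ ψ x := fun x hx =>
    (hψU.differentiableOn (by simp)).differentiableAt (hUopen.mem_nhds hx)
  have hχU : ContinuousOn χ U := by
    have haDψ : ContinuousOn (aD f ψ) U :=
      ((hwU.continuousOn).inv₀ hwne).smul hdψU
    exact haDψ.sub ((haDψ.inner (𝕜 := ℝ) hτU.continuousOn).smul hτU.continuousOn)
  -- algebraic identities
  have hwx : ∀ x, ‖deriv f x‖ = w x := fun x => rfl
  have hττ : ∀ x ∈ U, ⟪τ x, τ x⟫ = 1 := by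
    intro x hx
    have hτx : τ x = (w x)⁻¹ • deriv f x := rfl
    rw [hτx, real_inner_smul_left, real_inner_smul_right, real_inner_self_eq_norm_sq, hwx]
    field_simp [hwne x hx]
  have hψτ : ∀ x ∈ U, ⟪ψ x, τ x⟫ = 0 := by
    intro x hx
    have hψx : ψ x = aD f φ x - ⟪aD f φ x, τ x⟫ • τ x := rfl
    rw [hψx, inner_sub_left, real_inner_smul_left, hττ x hx, mul_one, sub_self]
  -- derivative identities
  have hφdiff : ∀ x : ℝ, HasDerivAt φ (deriv φ x) x := fun x =>
    ((hφ.differentiable (by simp)) x).hasDerivAt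
  have hdφeq : ∀ x ∈ U, deriv φ x = w x • aD f φ x := by
    intro x hx
    exact (smul_inv_smul₀ (hwne x hx) _).symm
  have hdψeq : ∀ x ∈ U, deriv ψ x = w x • aD f ψ x := by
    intro x hx
    exact (smul_inv_smul₀ (hwne x hx) _).symm
  have hdecφ : ∀ x, aD f φ x = ψ x + ⟪aD f φ x, τ x⟫ • τ x := by
    intro x
    have : ψ x = aD f φ x - ⟪aD f φ x, τ x⟫ • τ x := rfl
    rw [this, sub_add_cancel]
  have hdecψ : ∀ x, aD f ψ x = χ x + ⟪aD f ψ x, τ x⟫ • τ x := by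
    intro x
    have : χ x = aD f ψ x - ⟪aD f ψ x, τ x⟫ • τ x := rfl
    rw [this, sub_add_cancel]
  have hder_g : ∀ x ∈ Icc (0:ℝ) 1, HasDerivAt (fun y => ⟪φ y, ψ y⟫)
      ((⟪ψ x, ψ x⟫ + ⟪φ x, χ x⟫) * w x) x := by
    intro x hx
    have hxU : x ∈ U := hIccU hx
    have h := (hφdiff x).inner ℝ ((hψdiff x hxU).hasDerivAt)
    refine h.congr_deriv ?_
    have e1 : ⟪φ x, deriv ψ x⟫ = w x * ⟪φ x, χ x⟫ := by
      rw [hdψeq x hxU, real_inner_smul_right, hdecψ x, inner_add_right, real_inner_smul_right,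
        hnorm x hx, mul_zero, add_zero]
    have hτψ : ⟪τ x, ψ x⟫ = (0:ℝ) := by rw [real_inner_comm]; exact hψτ x hxU
    have e2 : ⟪deriv φ x, ψ x⟫ = w x * ⟪ψ x, ψ x⟫ := by
      rw [hdφeq x hxU, real_inner_smul_left, hdecφ x, inner_add_left, real_inner_smul_left,
        hτψ, mul_zero, add_zero]
    rw [e1, e2]; ring
  have hder_u : ∀ x ∈ Icc (0:ℝ) 1, HasDerivAt (fun y => ⟪φ y, φ y⟫)
      (2 * ⟪φ x, ψ x⟫ * w x) x := by
    intro x hx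
    have hxU : x ∈ U := hIccU hx
    have h := (hφdiff x).inner ℝ (hφdiff x)
    refine h.congr_deriv ?_
    have e1 : ⟪φ x, deriv φ x⟫ = w x * ⟪φ x, ψ x⟫ := by
      rw [hdφeq x hxU, real_inner_smul_right, hdecφ x, inner_add_right, real_inner_smul_right,
        hnorm x hx, mul_zero, add_zero]
    have e2 : ⟪deriv φ x, φ x⟫ = ⟪φ x, deriv φ x⟫ := real_inner_comm _ _
    rw [e2, e1]; ring
  have hder_v : ∀ x ∈ Icc (0:ℝ) 1, HasDerivAt (fun y => ⟪ψ y, ψ y⟫)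
      (2 * ⟪ψ x, χ x⟫ * w x) x := by
    intro x hx
    have hxU : x ∈ U := hIccU hx
    have hψx := (hψdiff x hxU).hasDerivAt
    have h := hψx.inner ℝ hψx
    refine h.congr_deriv ?_
    have e1 : ⟪ψ x, deriv ψ x⟫ = w x * ⟪ψ x, χ x⟫ := by
      rw [hdψeq x hxU, real_inner_smul_right, hdecψ x, inner_add_right, real_inner_smul_right,
        hψτ x hxU, mul_zero, add_zero]
    have e2 : ⟪deriv ψ x, ψ x⟫ = ⟪ψ x, deriv ψ x⟫ := real_inner_comm _ _
    rw [e2, e1]; ring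
  -- integrals
  set I0 : ℝ := ∫ x in (0:ℝ)..1, ‖φ x‖^2 * w x with hI0def
  set I1 : ℝ := ∫ x in (0:ℝ)..1, ‖ψ x‖^2 * w x with hI1def
  set I2 : ℝ := ∫ x in (0:ℝ)..1, ‖χ x‖^2 * w x with hI2def
  set L : ℝ := len f with hLdef
  have hφc : ContinuousOn φ (Icc 0 1) := hφ.continuous.continuousOn
  have hψc : ContinuousOn ψ (Icc 0 1) := hψU.continuousOn.mono hIccU
  have hχc : ContinuousOn χ (Icc 0 1) := hχU.mono hIccU
  have hlen : L = ∫ x in (0:ℝ)..1, w x := rfl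
  have hLpos : 0 < L := by
    rw [hlen]
    apply intervalIntegral.integral_pos zero_lt_one hwcont.continuousOn
      (fun x _ => norm_nonneg _)
    exact ⟨1/2, ⟨by norm_num, by norm_num⟩, hwpos _ (hIccU (by norm_num))⟩
  have hI0 : 0 ≤ I0 := intervalIntegral.integral_nonneg zero_le_one
    (fun x _ => mul_nonneg (sq_nonneg _) (norm_nonneg _))
  have hI1 : 0 ≤ I1 := intervalIntegral.integral_nonneg zero_le_one
    (fun x _ => mul_nonneg (sq_nonneg _) (norm_nonneg _))
  have hI2 : 0 ≤ I2 := intervalIntegral.integral_nonneg zero_le_one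
    (fun x _ => mul_nonneg (sq_nonneg _) (norm_nonneg _))
  have hwnn : ∀ x, 0 ≤ w x := fun x => norm_nonneg _
  -- integration by parts
  have hibp : I1 = ⟪φ 1, ψ 1⟫ - ⟪φ 0, ψ 0⟫ - ∫ x in (0:ℝ)..1, ⟪φ x, χ x⟫ * w x := by
    have hftc := intervalIntegral.integral_eq_sub_of_hasDerivAt
      (f := fun y => ⟪φ y, ψ y⟫) (f' := fun x => (⟪ψ x, ψ x⟫ + ⟪φ x, χ x⟫) * w x)
      (fun x hx => hder_g x (by rwa [uIcc_of_le zero_le_one] at hx))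
      (ii_of_contOn (((hψc.inner hψc).add (hφc.inner hχc)).mul hwcont.continuousOn))
    have hsplit : (∫ x in (0:ℝ)..1, (⟪ψ x, ψ x⟫ + ⟪φ x, χ x⟫) * w x)
        = (∫ x in (0:ℝ)..1, ⟪ψ x, ψ x⟫ * w x) + ∫ x in (0:ℝ)..1, ⟪φ x, χ x⟫ * w x := by
      simp only [add_mul]
      exact intervalIntegral.integral_add (ii_of_contOn ((hψc.inner hψc).mul hwcont.continuousOn))
        (ii_of_contOn ((hφc.inner hχc).mul hwcont.continuousOn))
    have e1 : (∫ x in (0:ℝ)..1, ⟪ψ x, ψ x⟫ * w x) = I1 := by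
      rw [hI1def]; congr 1; funext x; rw [real_inner_self_eq_norm_sq]
    rw [hsplit, e1] at hftc
    linarith [hftc]
  have hPQ : |∫ x in (0:ℝ)..1, ⟪φ x, χ x⟫ * w x| ≤ Real.sqrt I0 * Real.sqrt I2 := by
    have habs1 : |∫ x in (0:ℝ)..1, ⟪φ x, χ x⟫ * w x| ≤ ∫ x in (0:ℝ)..1, |⟪φ x, χ x⟫ * w x| :=
      intervalIntegral.abs_integral_le_integral_abs zero_le_one
    have habs2 : (∫ x in (0:ℝ)..1, |⟪φ x, χ x⟫ * w x|) ≤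
        ∫ x in (0:ℝ)..1, ‖φ x‖ * ‖χ x‖ * w x := by
      apply intervalIntegral.integral_mono_on zero_le_one
        (ii_of_contOn ((hφc.inner hχc).mul hwcont.continuousOn).abs)
        (ii_of_contOn ((hφc.norm.mul hχc.norm).mul hwcont.continuousOn))
      intro x hx
      simp only [Pi.mul_apply]
      rw [abs_mul, abs_of_nonneg (hwnn x)]
      exact mul_le_mul_of_nonneg_right (abs_real_inner_le_norm _ _) (hwnn x)
    have hcs := cs_wint φ χ w hφc hχc hwcont hwnn
    rw [← hI0def, ← hI2def] at hcs
    linarith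
  -- trace estimates
  have htraceφ : ∀ e ∈ Icc (0:ℝ) 1, ⟪φ e, φ e⟫ ≤ L⁻¹ * I0 + 2 * (Real.sqrt I0 * Real.sqrt I1) := by
    intro e he
    have ht := trace_bound (fun x => ⟪φ x, φ x⟫) (fun x => 2 * ⟪φ x, ψ x⟫ * w x) w hder_u
      ((continuousOn_const.mul (hφc.inner hψc)).mul hwcont.continuousOn) hwcont hwnn e he
    rw [← hlen] at ht
    have eI : (∫ x in (0:ℝ)..1, ⟪φ x, φ x⟫ * w x) = I0 := by
      rw [hI0def]; congr 1; funext x; rw [real_inner_self_eq_norm_sq]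
    rw [eI] at ht
    have hm1 : (∫ x in (0:ℝ)..1, |2 * ⟪φ x, ψ x⟫ * w x|) ≤
        ∫ x in (0:ℝ)..1, 2 * (‖φ x‖ * ‖ψ x‖ * w x) := by
      apply intervalIntegral.integral_mono_on zero_le_one
        (ii_of_contOn ((continuousOn_const.mul (hφc.inner hψc)).mul hwcont.continuousOn).abs)
        (ii_of_contOn (continuousOn_const.mul ((hφc.norm.mul hψc.norm).mul hwcont.continuousOn)))
      intro x hx
      simp only [Pi.mul_apply]
      have hle := abs_real_inner_le_norm (φ x) (ψ x)
      have : |2 * ⟪φ x, ψ x⟫ * w x| = 2 * |⟪φ x, ψ x⟫| * w x := by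
        rw [abs_mul, abs_mul, abs_two, abs_of_nonneg (hwnn x)]
      rw [this]
      nlinarith [hwnn x, abs_nonneg ⟪φ x, ψ x⟫]
    have hm2 : (∫ x in (0:ℝ)..1, 2 * (‖φ x‖ * ‖ψ x‖ * w x)) =
        2 * ∫ x in (0:ℝ)..1, ‖φ x‖ * ‖ψ x‖ * w x := intervalIntegral.integral_const_mul _ _
    have hcs := cs_wint φ ψ w hφc hψc hwcont hwnn
    rw [← hI0def, ← hI1def] at hcs
    have hMle : (∫ x in (0:ℝ)..1, |2 * ⟪φ x, ψ x⟫ * w x|) ≤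
        2 * (Real.sqrt I0 * Real.sqrt I1) := by
      rw [hm2] at hm1; linarith
    have hwInn : 0 ≤ ∫ x in (0:ℝ)..1, |2 * ⟪φ x, ψ x⟫ * w x| :=
      intervalIntegral.integral_nonneg zero_le_one (fun x _ => abs_nonneg _)
    have ht2 : ⟪φ e, φ e⟫ * L ≤ I0 + 2 * (Real.sqrt I0 * Real.sqrt I1) * L := by
      have := mul_le_mul_of_nonneg_right hMle hLpos.le
      linarith
    have hfin : ⟪φ e, φ e⟫ ≤ (I0 + 2 * (Real.sqrt I0 * Real.sqrt I1) * L) / L :=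
      (le_div_iff₀ hLpos).mpr ht2
    calc ⟪φ e, φ e⟫ ≤ (I0 + 2 * (Real.sqrt I0 * Real.sqrt I1) * L) / L := hfin
      _ = L⁻¹ * I0 + 2 * (Real.sqrt I0 * Real.sqrt I1) := by
          rw [add_div, mul_div_assoc, div_self hLpos.ne', mul_one, div_eq_inv_mul]
  have htraceψ : ∀ e ∈ Icc (0:ℝ) 1, ⟪ψ e, ψ e⟫ ≤ L⁻¹ * I1 + 2 * (Real.sqrt I1 * Real.sqrt I2) := by
    intro e he
    have ht := trace_bound (fun x => ⟪ψ x, ψ x⟫) (fun x => 2 * ⟪ψ x, χ x⟫ * w x) w hder_v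
      ((continuousOn_const.mul (hψc.inner hχc)).mul hwcont.continuousOn) hwcont hwnn e he
    rw [← hlen] at ht
    have eI : (∫ x in (0:ℝ)..1, ⟪ψ x, ψ x⟫ * w x) = I1 := by
      rw [hI1def]; congr 1; funext x; rw [real_inner_self_eq_norm_sq]
    rw [eI] at ht
    have hm1 : (∫ x in (0:ℝ)..1, |2 * ⟪ψ x, χ x⟫ * w x|) ≤
        ∫ x in (0:ℝ)..1, 2 * (‖ψ x‖ * ‖χ x‖ * w x) := by
      apply intervalIntegral.integral_mono_on zero_le_one
        (ii_of_contOn ((continuousOn_const.mul (hψc.inner hχc)).mul hwcont.continuousOn).abs)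
        (ii_of_contOn (continuousOn_const.mul ((hψc.norm.mul hχc.norm).mul hwcont.continuousOn)))
      intro x hx
      simp only [Pi.mul_apply]
      have hle := abs_real_inner_le_norm (ψ x) (χ x)
      have : |2 * ⟪ψ x, χ x⟫ * w x| = 2 * |⟪ψ x, χ x⟫| * w x := by
        rw [abs_mul, abs_mul, abs_two, abs_of_nonneg (hwnn x)]
      rw [this]
      nlinarith [hwnn x, abs_nonneg ⟪ψ x, χ x⟫]
    have hm2 : (∫ x in (0:ℝ)..1, 2 * (‖ψ x‖ * ‖χ x‖ * w x)) =
        2 * ∫ x in (0:ℝ)..1, ‖ψ x‖ * ‖χ x‖ * w x := intervalIntegral.integral_const_mul _ _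
    have hcs := cs_wint ψ χ w hψc hχc hwcont hwnn
    rw [← hI1def, ← hI2def] at hcs
    have hMle : (∫ x in (0:ℝ)..1, |2 * ⟪ψ x, χ x⟫ * w x|) ≤
        2 * (Real.sqrt I1 * Real.sqrt I2) := by
      rw [hm2] at hm1; linarith
    have hwInn : 0 ≤ ∫ x in (0:ℝ)..1, |2 * ⟪ψ x, χ x⟫ * w x| :=
      intervalIntegral.integral_nonneg zero_le_one (fun x _ => abs_nonneg _)
    have ht2 : ⟪ψ e, ψ e⟫ * L ≤ I1 + 2 * (Real.sqrt I1 * Real.sqrt I2) * L := by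
      have := mul_le_mul_of_nonneg_right hMle hLpos.le
      linarith
    have hfin : ⟪ψ e, ψ e⟫ ≤ (I1 + 2 * (Real.sqrt I1 * Real.sqrt I2) * L) / L :=
      (le_div_iff₀ hLpos).mpr ht2
    calc ⟪ψ e, ψ e⟫ ≤ (I1 + 2 * (Real.sqrt I1 * Real.sqrt I2) * L) / L := hfin
      _ = L⁻¹ * I1 + 2 * (Real.sqrt I1 * Real.sqrt I2) := by
          rw [add_div, mul_div_assoc, div_self hLpos.ne', mul_one, div_eq_inv_mul]
  -- the ∀ t inequality
  have hkey : ∀ t : ℝ, 0 < t → (Real.sqrt I1)^2 ≤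
      Real.sqrt I0 * Real.sqrt I2 + t * L⁻¹ * (Real.sqrt I0)^2 +
      2 * t * Real.sqrt I0 * Real.sqrt I1 + t⁻¹ * L⁻¹ * (Real.sqrt I1)^2 +
      2 * t⁻¹ * Real.sqrt I1 * Real.sqrt I2 := by
    intro t ht
    rw [Real.sq_sqrt hI0, Real.sq_sqrt hI1]
    have h0le : ∀ e ∈ Icc (0:ℝ) 1, |⟪φ e, ψ e⟫| ≤ (t * ⟪φ e, φ e⟫ + t⁻¹ * ⟪ψ e, ψ e⟫) / 2 := by
      intro e he
      have h1 : |⟪φ e, ψ e⟫| ≤ ‖φ e‖ * ‖ψ e‖ := abs_real_inner_le_norm _ _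
      have h3 := young_t ht ‖φ e‖ ‖ψ e‖
      rw [real_inner_self_eq_norm_sq, real_inner_self_eq_norm_sq]
      linarith
    have hb1 := h0le 1 (by norm_num)
    have hb0 := h0le 0 (by norm_num)
    have hI1le : I1 ≤ |⟪φ 1, ψ 1⟫| + |⟪φ 0, ψ 0⟫| + Real.sqrt I0 * Real.sqrt I2 := by
      have hQ := neg_abs_le (∫ x in (0:ℝ)..1, ⟪φ x, χ x⟫ * w x)
      linarith [hibp, le_abs_self ⟪φ 1, ψ 1⟫, neg_abs_le ⟪φ 0, ψ 0⟫, hPQ]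
    have m1 := mul_le_mul_of_nonneg_left (htraceφ 1 (by norm_num)) ht.le
    have m0 := mul_le_mul_of_nonneg_left (htraceφ 0 (by norm_num)) ht.le
    have m1' := mul_le_mul_of_nonneg_left (htraceψ 1 (by norm_num)) (inv_pos.mpr ht).le
    have m0' := mul_le_mul_of_nonneg_left (htraceψ 0 (by norm_num)) (inv_pos.mpr ht).le
    nlinarith [hI1le, hb1, hb0, m1, m0, m1', m0']
  have hmain : I1 ≤ 300 * (Real.sqrt I0 * Real.sqrt I2 + (L⁻¹)^2 * I0) := by
    have := interp_alg (Real.sqrt_nonneg I0) (Real.sqrt_nonneg I1) (Real.sqrt_nonneg I2)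
      (inv_pos.mpr hLpos) hkey
    rw [Real.sq_sqrt hI0, Real.sq_sqrt hI1] at this
    linarith [this]
  -- convert to sN
  have hpow2 : ∀ y : ℝ, y ^ (2:ℝ) = y^2 := fun y => Real.rpow_two y
  have hsqrt : ∀ y : ℝ, y ^ ((1:ℝ)/2) = Real.sqrt y := fun y => (Real.sqrt_eq_rpow y).symm
  have hsN0 : sN f 2 0 φ = Real.sqrt L * Real.sqrt I0 := by
    have e0 : (fun x => ‖nSIter f 0 φ x‖ ^ (2:ℝ) * ‖deriv f x‖) = fun x => ‖φ x‖^2 * w x := by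
      funext x; rw [hpow2]; rfl
    simp only [sN, e0]
    rw [← hLdef, ← hI0def]
    norm_num
    rw [hsqrt L, hsqrt I0]
  have hsN1 : sN f 2 1 φ = (L * Real.sqrt L) * Real.sqrt I1 := by
    have e0 : (fun x => ‖nSIter f 1 φ x‖ ^ (2:ℝ) * ‖deriv f x‖) = fun x => ‖ψ x‖^2 * w x := by
      funext x; rw [hpow2]; rfl
    simp only [sN, e0]
    rw [← hLdef, ← hI1def]
    rw [show ((1:ℕ):ℝ) + 1 - 1/(2:ℝ) = 1 + (1:ℝ)/2 by norm_num, Real.rpow_add hLpos,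
      Real.rpow_one, hsqrt L, hsqrt I1]
  have hsN2 : sN f 2 2 φ = (L^2 * Real.sqrt L) * Real.sqrt I2 := by
    have e0 : (fun x => ‖nSIter f 2 φ x‖ ^ (2:ℝ) * ‖deriv f x‖) = fun x => ‖χ x‖^2 * w x := by
      funext x; rw [hpow2]; rfl
    simp only [sN, e0]
    rw [← hLdef, ← hI2def]
    rw [show ((2:ℕ):ℝ) + 1 - 1/(2:ℝ) = 2 + (1:ℝ)/2 by norm_num, Real.rpow_add hLpos,
      Real.rpow_two, hsqrt L, hsqrt I2]
  have hsNk : sNk f 2 φ = sN f 2 0 φ + sN f 2 1 φ + sN f 2 2 φ := by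
    simp [sNk, Finset.sum_range_succ]
  -- final algebra
  have hS0n : 0 ≤ sN f 2 0 φ := by rw [hsN0]; positivity
  have hS1n : 0 ≤ sN f 2 1 φ := by rw [hsN1]; positivity
  have hS2n : 0 ≤ sN f 2 2 φ := by rw [hsN2]; positivity
  have hKn : 0 ≤ sNk f 2 φ := by rw [hsNk]; linarith
  have hLinv : L^3 * (L⁻¹)^2 = L := by field_simp
  have key : L^3 * I1 ≤ 300 * (L^3 * (Real.sqrt I0 * Real.sqrt I2) + L * I0) := by
    calc L^3 * I1 ≤ L^3 * (300 * (Real.sqrt I0 * Real.sqrt I2 + (L⁻¹)^2 * I0)) :=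
          mul_le_mul_of_nonneg_left hmain (by positivity)
      _ = 300 * (L^3 * (Real.sqrt I0 * Real.sqrt I2)) + 300 * ((L^3 * (L⁻¹)^2) * I0) := by ring
      _ = 300 * (L^3 * (Real.sqrt I0 * Real.sqrt I2) + L * I0) := by rw [hLinv]; ring
  have hs1sq : (sN f 2 1 φ)^2 = L^3 * I1 := by
    rw [hsN1, mul_pow, mul_pow, Real.sq_sqrt hLpos.le, Real.sq_sqrt hI1]; ring
  have hs02 : sN f 2 0 φ * sN f 2 2 φ = L^3 * (Real.sqrt I0 * Real.sqrt I2) := by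
    rw [hsN0, hsN2, show (Real.sqrt L * Real.sqrt I0) * ((L^2 * Real.sqrt L) * Real.sqrt I2)
      = (Real.sqrt L * Real.sqrt L) * (L^2 * (Real.sqrt I0 * Real.sqrt I2)) from by ring,
      Real.mul_self_sqrt hLpos.le]
    ring
  have hs0sq : (sN f 2 0 φ)^2 = L * I0 := by
    rw [hsN0, mul_pow, Real.sq_sqrt hLpos.le, Real.sq_sqrt hI0]
  have hsq : (sN f 2 1 φ)^2 ≤ 300 * (sN f 2 0 φ * sN f 2 2 φ + (sN f 2 0 φ)^2) := by
    rw [hs1sq, hs02, hs0sq]; linarith [key]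
  have hsq2 : (sN f 2 1 φ)^2 ≤ 600 * (sN f 2 0 φ * sNk f 2 φ) := by
    have h1 : sN f 2 0 φ * sN f 2 2 φ ≤ sN f 2 0 φ * sNk f 2 φ :=
      mul_le_mul_of_nonneg_left (by rw [hsNk]; linarith) hS0n
    have h2 : (sN f 2 0 φ)^2 ≤ sN f 2 0 φ * sNk f 2 φ := by
      have := mul_le_mul_of_nonneg_left (show sN f 2 0 φ ≤ sNk f 2 φ by rw [hsNk]; linarith) hS0n
      nlinarith [this]
    linarith [hsq]
  have hε0 : 0 < ε := hε.1
  have hεinv : ε * ε⁻¹ = 1 := mul_inv_cancel₀ hε0.ne'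
  have hks : (ε * sNk f 2 φ) * (ε⁻¹ * sN f 2 0 φ) = sNk f 2 φ * sN f 2 0 φ := by
    calc (ε * sNk f 2 φ) * (ε⁻¹ * sN f 2 0 φ) = (ε * ε⁻¹) * (sNk f 2 φ * sN f 2 0 φ) := by ring
      _ = sNk f 2 φ * sN f 2 0 φ := by rw [hεinv, one_mul]
  have hRHSnn : 0 ≤ 13 * (ε * sNk f 2 φ + ε⁻¹ * sN f 2 0 φ) := by
    have := mul_nonneg hε0.le hKn
    have := mul_nonneg (inv_pos.mpr hε0).le hS0n
    linarith
  have hsq3 : (sN f 2 1 φ)^2 ≤ (13 * (ε * sNk f 2 φ + ε⁻¹ * sN f 2 0 φ))^2 := by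
    nlinarith [hsq2, sq_nonneg (ε * sNk f 2 φ - ε⁻¹ * sN f 2 0 φ), hks,
      mul_nonneg hKn hS0n]
  have hfin := Real.sqrt_le_sqrt hsq3
  rw [Real.sqrt_sq hS1n, Real.sqrt_sq hRHSnn] at hfin
  exact hfin

end
end

section
/- Let f : [0,1] → ℝⁿ be a smooth regular curve with curvature vector κ. Then for every k ∈ ℕ there is a constant C = C(n,k) such that ‖κ‖_{k,2} ≤ C(‖∇ₛᵏκ‖₂ + ‖κ‖₂). -/
open scoped RealInnerProductSpace
open MeasureTheory

noncomputable section

variable {n : ℕ}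

/-- Cauchy-Schwarz from the quadratic trick. -/
lemma cs_from_quadratic {S A B : ℝ} (hS : 0 ≤ S) (hA : 0 ≤ A) (hB : 0 ≤ B)
    (h : ∀ t : ℝ, 0 < t → 2*t*S ≤ t^2*A + B) : S ≤ Real.sqrt A * Real.sqrt B := by
  have hsq : S^2 ≤ A * B := by
    rcases eq_or_lt_of_le hS with hS0 | hS0
    · simpa [← hS0] using mul_nonneg hA hB
    rcases eq_or_lt_of_le hA with hA0 | hA0
    · exfalso
      have := h ((B+1)/(2*S)) (by positivity)
      rw [← hA0] at this
      have h2 : (B+1)/(2*S) * (2*S) = B + 1 := div_mul_cancel₀ _ (by positivity)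
      nlinarith
    · have hle := h (S/A) (by positivity)
      have h3 := mul_le_mul_of_nonneg_right hle hA
      have e1 : 2*(S/A)*S*A = 2*S^2 := by field_simp
      have e2 : ((S/A)^2*A + B)*A = S^2 + B*A := by field_simp
      nlinarith
  calc S = Real.sqrt (S^2) := by rw [Real.sqrt_sq hS]
    _ ≤ Real.sqrt (A*B) := Real.sqrt_le_sqrt hsq
    _ = Real.sqrt A * Real.sqrt B := Real.sqrt_mul hA B

/-- One-step interpolation in ε-form from the parametrized inequality. -/
lemma eps_step {a b c : ℝ} (ha : 0 ≤ a) (hb : 0 ≤ b) (hc : 0 ≤ c)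
    (h : ∀ s : ℝ, 0 < s → b^2 ≤ s⁻¹ * (b^2 + 2*b*c) + s*(a^2 + 2*b*a) + c*a)
    {ε : ℝ} (hε : 0 < ε) (hε2 : ε ≤ 1/2) : b ≤ ε*c + (225/ε)*a := by
  by_contra hcon
  push_neg at hcon
  have hrhs : 0 ≤ ε*c + (225/ε)*a := by positivity
  have hb0 : 0 < b := lt_of_le_of_lt hrhs hcon
  have F1 : ε*c ≤ b := by nlinarith [mul_nonneg (div_nonneg (by norm_num : (0:ℝ) ≤ 225) hε.le) ha]
  have F2 : 225*a ≤ ε*b := by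
    have h1 := mul_lt_mul_of_pos_left hcon hε
    have e : ε*(225/ε*a) = 225*a := by field_simp
    nlinarith [mul_nonneg (mul_nonneg hε.le hε.le) hc]
  have hkey := h (15/ε) (by positivity)
  have h15 : (15/ε)⁻¹ = ε/15 := by
    rw [inv_div]
  rw [h15] at hkey
  have hkey2 : ε*b^2 ≤ ε^2/15*(b^2 + 2*b*c) + 15*(a^2+2*b*a) + ε*(c*a) := by
    have h4 := mul_le_mul_of_nonneg_left hkey hε.le
    have e : ε * (ε/15*(b^2 + 2*b*c) + 15/ε*(a^2 + 2*b*a) + c*a)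
        = ε^2/15*(b^2 + 2*b*c) + 15*(a^2+2*b*a) + ε*(c*a) := by
      field_simp
    linarith [e ▸ h4]
  have A1 : ε*c*b ≤ b*b := mul_le_mul_of_nonneg_right F1 hb
  have A2 : 225*(a*b) ≤ ε*b*b := by nlinarith [mul_le_mul_of_nonneg_right F2 hb]
  have A4 : ε*(c*a) ≤ b*a := by nlinarith [mul_le_mul_of_nonneg_right F1 ha]
  have A5 : (225*a)*(225*a) ≤ (ε*b)*(ε*b) :=
    mul_le_mul F2 F2 (by positivity) (by positivity)
  have B1 : ε^2 ≤ ε/2 := by nlinarith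
  have C1 : ε^2*b^2 ≤ (ε/2)*b^2 := mul_le_mul_of_nonneg_right B1 (sq_nonneg b)
  have D1 : ε*(ε*c*b) ≤ ε*(b*b) := mul_le_mul_of_nonneg_left A1 hε.le
  have hεb : 0 < ε*b^2 := by positivity
  nlinarith [hkey2, C1, D1, A2, A4, A5, hεb]




/-- Chain lemma: iterating the ε-step inequality. -/
lemma chain_lemma (x : ℕ → ℝ) (hx : ∀ j, 0 ≤ x j)
    (hstep : ∀ i : ℕ, ∀ ε : ℝ, 0 < ε → ε ≤ 1/2 →
       x (i+1) ≤ ε * x (i+2) + (225/ε) * x i) (k : ℕ) :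
    ∑ i ∈ Finset.range (k+1), x i ≤
      ((k+1) * (2*((10^6:ℝ)^((k+1)^2) * 4^(k+1)) + 1)) * (x 0 + x k) := by
  set Λ : ℝ := 10^6 with hΛ
  have hΛ1 : (1:ℝ) ≤ Λ := by norm_num [hΛ]
  have hΛ0 : (0:ℝ) < Λ := by norm_num [hΛ]
  have Q : ∀ i : ℕ, ∀ ε : ℝ, 0 < ε → ε ≤ 1/2 →
      x (i+1) ≤ ε * x (i+2) + (Λ^((i+1)^2) / ε^(2*(i+1))) * x 0 := by
    intro i
    induction i with
    | zero =>
      intro ε hε hε2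
      have h1 := hstep 0 ε hε hε2
      have hcoef : 225/ε ≤ Λ^(1^2)/ε^(2*1) := by
        simp only [pow_one, one_pow]
        rw [div_le_div_iff₀ hε (by positivity)]
        have hε1 : ε ≤ 1 := by linarith
        have e : ε^(2*1) = ε*ε := by ring
        rw [e]
        nlinarith [mul_le_mul_of_nonneg_right hε1 hε.le, hε.le]
      have := mul_le_mul_of_nonneg_right hcoef (hx 0)
      simpa using h1.trans (by linarith)
    | succ i ih =>
      intro ε hε hε2
      have hε1 : ε ≤ 1 := by linarith
      have h1 := hstep (i+1) (ε/2) (by positivity) (by linarith)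
      have h2 := ih (ε/1800) (by positivity) (by linarith)
      set p := (i+1)^2 with hp
      set q := 2*(i+1) with hq
      have e450 : 225/(ε/2) = 450/ε := by
        rw [div_div_eq_mul_div]; ring_nf
      have eE : Λ^p/(ε/1800)^q = Λ^p * 1800^q / ε^q := by
        rw [div_pow]; field_simp
      rw [e450] at h1
      rw [eE] at h2
      have h1' : x (i+2) ≤ ε/2 * x (i+3) + 450/ε * x (i+1) := by
        simpa only [show i+1+1 = i+2 by omega, show i+1+2 = i+3 by omega] using h1
      have h3 := mul_le_mul_of_nonneg_left h2 (by positivity : (0:ℝ) ≤ 450/ε)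
      rw [mul_add] at h3
      have e14 : 450/ε * (ε/1800 * x (i+2)) = (1/4) * x (i+2) := by
        field_simp; ring
      rw [e14] at h3
      have hmain : x (i+2) ≤ (2/3*ε) * x (i+3) + (4/3) * ((450/ε) * (Λ^p * 1800^q / ε^q * x 0)) := by
        linarith
      have hcoef2 : (4/3) * (450/ε) * (Λ^p * 1800^q / ε^q) ≤ Λ^((i+2)^2)/ε^(2*(i+2)) := by
        have hnum : (600:ℝ) * (Λ^p * 1800^q) ≤ Λ^(p+q+1) := by
          have h1800 : (1800:ℝ)^q ≤ Λ^q := pow_le_pow_left₀ (by norm_num) (by norm_num [hΛ]) q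
          have s1 : 600*(Λ^p*1800^q) ≤ 600*(Λ^p*Λ^q) := by
            nlinarith [mul_le_mul_of_nonneg_left h1800 (by positivity : (0:ℝ) ≤ 600*Λ^p)]
          have s2 : 600*(Λ^p*Λ^q) ≤ Λ*(Λ^p*Λ^q) :=
            mul_le_mul_of_nonneg_right (by norm_num [hΛ] : (600:ℝ) ≤ Λ) (by positivity)
          calc (600:ℝ) * (Λ^p * 1800^q) ≤ Λ * (Λ^p * Λ^q) := by linarith
            _ = Λ^(p+q+1) := by rw [pow_add, pow_one]; ring
        have hden : ε^(q+2) ≤ ε^(q+1) := pow_le_pow_of_le_one hε.le hε1 (by omega)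
        have e1 : (4/3) * (450/ε) * (Λ^p * 1800^q / ε^q) = (600 * (Λ^p * 1800^q))/ε^(q+1) := by
          rw [pow_succ]; field_simp; ring
        have e2 : (i+2)^2 = p+q+1 := by rw [hp, hq]; ring
        have e3 : 2*(i+2) = q+2 := by rw [hq]; ring
        rw [e1, e2, e3]
        exact div_le_div₀ (by positivity) hnum (by positivity) hden
      have hfin : (4/3) * ((450/ε) * (Λ^p * 1800^q / ε^q * x 0))
          ≤ (Λ^((i+2)^2)/ε^(2*(i+2))) * x 0 := by
        have h5 := mul_le_mul_of_nonneg_right hcoef2 (hx 0)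
        calc (4/3) * ((450/ε) * (Λ^p * 1800^q / ε^q * x 0))
            = ((4/3) * (450/ε) * (Λ^p * 1800^q / ε^q)) * x 0 := by ring
          _ ≤ _ := h5
      have hεx : (2/3*ε) * x (i+3) ≤ ε * x (i+3) := by
        nlinarith [hx (i+3)]
      simp only [show i+1+1 = i+2 by omega, show i+1+2 = i+3 by omega]
      linarith
  -- uniform constant M for indices ≤ k+1
  set M : ℝ := Λ^((k+1)^2) * 4^(k+1) with hM
  have hM1 : (1:ℝ) ≤ M := by
    have h1 : (1:ℝ) ≤ Λ^((k+1)^2) := one_le_pow₀ hΛ1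
    have h2 : (1:ℝ) ≤ (4:ℝ)^(k+1) := one_le_pow₀ (by norm_num)
    nlinarith
  have R : ∀ i : ℕ, i + 1 ≤ k → x (i+1) ≤ (1/2) * x (i+2) + M * x 0 := by
    intro i hik
    have h := Q i (1/2) (by norm_num) (le_refl _)
    have hcoef : Λ^((i+1)^2) / (1/2:ℝ)^(2*(i+1)) ≤ M := by
      rw [div_eq_mul_inv]
      have e : (((1/2:ℝ))^(2*(i+1)))⁻¹ = 4^(i+1) := by
        rw [← inv_pow, pow_mul]
        norm_num
      rw [e, hM]
      have h1 : Λ^((i+1)^2) ≤ Λ^((k+1)^2) := pow_le_pow_right₀ hΛ1 (by nlinarith [hik])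
      have h2 : (4:ℝ)^(i+1) ≤ 4^(k+1) := pow_le_pow_right₀ (by norm_num) (by omega)
      exact mul_le_mul h1 h2 (by positivity) (by positivity)
    have := mul_le_mul_of_nonneg_right hcoef (hx 0)
    linarith
  -- downward induction
  have P : ∀ j : ℕ, ∀ i : ℕ, i + j = k → x i ≤ x k + 2*M*x 0 := by
    intro j
    induction j with
    | zero => intro i hi; simp at hi; subst hi
              have := mul_nonneg (by linarith : (0:ℝ) ≤ 2*M) (hx 0); linarith
    | succ j ih =>
      intro i hi
      have hik : i + 1 ≤ k := by omega
      have hnext := ih (i+1) (by omega)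
      match i with
      | 0 =>
        nlinarith [hx 0, hx k, hM1]
      | (m+1) =>
        have h := R m (by omega)
        have h2 : m+1+1 = m+2 := by omega
        rw [h2] at hnext
        nlinarith [hx 0, hx k]
  have hsum : ∀ i ∈ Finset.range (k+1), x i ≤ x k + 2*M*x 0 := by
    intro i hi
    simp only [Finset.mem_range] at hi
    exact P (k - i) i (by omega)
  calc ∑ i ∈ Finset.range (k+1), x i ≤ ∑ _i ∈ Finset.range (k+1), (x k + 2*M*x 0) :=
        Finset.sum_le_sum hsum
    _ = (k+1) * (x k + 2*M*x 0) := by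
        rw [Finset.sum_const, Finset.card_range]; push_cast; ring
    _ ≤ ((k+1) * (2*M + 1)) * (x 0 + x k) := by
        have h1 : x k + 2*M*x 0 ≤ (2*M+1) * (x 0 + x k) := by
          nlinarith [hx 0, hx k]
        have h2 : (0:ℝ) ≤ (k:ℝ)+1 := by positivity
        calc ((k:ℝ)+1) * (x k + 2*M*x 0) ≤ ((k:ℝ)+1) * ((2*M+1) * (x 0 + x k)) :=
              mul_le_mul_of_nonneg_left h1 h2
          _ = _ := by ring
    _ = _ := by rw [hM]

section analysis

variable {f : ℝ → En n}

/-- The set where the curve is regular. -/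
def regSet (f : ℝ → En n) : Set ℝ := {x | deriv f x ≠ 0}

lemma isOpen_regSet (hf : ContDiff ℝ (⊤ : ℕ∞) f) : IsOpen (regSet f) := by
  have hc : Continuous (deriv f) := (contDiff_infty_iff_deriv.mp hf).2.continuous
  have : regSet f = deriv f ⁻¹' ({(0 : En n)}ᶜ) := rfl
  rw [this]
  exact isOpen_compl_singleton.preimage hc

lemma contDiffOn_winv (hf : ContDiff ℝ (⊤ : ℕ∞) f) :
    ContDiffOn ℝ (⊤ : ℕ∞) (fun x => ‖deriv f x‖⁻¹) (regSet f) := by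
  have hd : ContDiffOn ℝ (⊤ : ℕ∞) (deriv f) (regSet f) :=
    ((contDiff_infty_iff_deriv.mp hf).2).contDiffOn
  exact (hd.norm ℝ (fun x hx => hx)).inv (fun x hx => norm_ne_zero_iff.mpr hx)

lemma contDiffOn_aD (hf : ContDiff ℝ (⊤ : ℕ∞) f) {g : ℝ → En n}
    (hg : ContDiffOn ℝ (⊤ : ℕ∞) g (regSet f)) :
    ContDiffOn ℝ (⊤ : ℕ∞) (aD f g) (regSet f) :=
  (contDiffOn_winv hf).smul (hg.deriv_of_isOpen (isOpen_regSet hf) (by simp))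

lemma contDiffOn_tang (hf : ContDiff ℝ (⊤ : ℕ∞) f) :
    ContDiffOn ℝ (⊤ : ℕ∞) (tang f) (regSet f) :=
  contDiffOn_aD hf hf.contDiffOn

lemma contDiffOn_curv (hf : ContDiff ℝ (⊤ : ℕ∞) f) :
    ContDiffOn ℝ (⊤ : ℕ∞) (curv f) (regSet f) :=
  contDiffOn_aD hf (contDiffOn_tang hf)

lemma contDiffOn_nS (hf : ContDiff ℝ (⊤ : ℕ∞) f) {g : ℝ → En n}
    (hg : ContDiffOn ℝ (⊤ : ℕ∞) g (regSet f)) :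
    ContDiffOn ℝ (⊤ : ℕ∞) (nS f g) (regSet f) := by
  have h1 := contDiffOn_aD hf hg
  have h2 := contDiffOn_tang hf
  exact h1.sub ((h1.inner ℝ h2).smul h2)

lemma contDiffOn_phi (hf : ContDiff ℝ (⊤ : ℕ∞) f) (j : ℕ) :
    ContDiffOn ℝ (⊤ : ℕ∞) (nSIter f j (curv f)) (regSet f) := by
  induction j with
  | zero => exact contDiffOn_curv hf
  | succ j ih => exact contDiffOn_nS hf ih

lemma diffAt_phi (hf : ContDiff ℝ (⊤ : ℕ∞) f) (j : ℕ) {x : ℝ} (hx : x ∈ regSet f) :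
    DifferentiableAt ℝ (nSIter f j (curv f)) x :=
  ((contDiffOn_phi hf j).differentiableOn (by simp)).differentiableAt
    ((isOpen_regSet hf).mem_nhds hx)

lemma norm_tang (hx : x ∈ regSet f) : ‖tang f x‖ = 1 := by
  have h : deriv f x ≠ 0 := hx
  simp only [tang, aD, norm_smul, norm_inv, norm_norm]
  rw [inv_mul_cancel₀ (norm_ne_zero_iff.mpr h)]

lemma inner_tang_self (hx : x ∈ regSet f) : ⟪tang f x, tang f x⟫ = 1 := by
  rw [real_inner_self_eq_norm_sq, norm_tang hx]; norm_num

lemma nS_inner_tang (g : ℝ → En n) (hx : x ∈ regSet f) : ⟪nS f g x, tang f x⟫ = 0 := by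
  simp only [nS, inner_sub_left, real_inner_smul_left, inner_tang_self hx]
  ring

lemma curv_inner_tang (hf : ContDiff ℝ (⊤ : ℕ∞) f) {x : ℝ} (hx : x ∈ regSet f) :
    ⟪curv f x, tang f x⟫ = 0 := by
  have hdt : DifferentiableAt ℝ (tang f) x :=
    ((contDiffOn_tang hf).differentiableOn (by simp)).differentiableAt
      ((isOpen_regSet hf).mem_nhds hx)
  have hda : HasDerivAt (fun y => ⟪tang f y, tang f y⟫)
      (⟪tang f x, deriv (tang f) x⟫ + ⟪deriv (tang f) x, tang f x⟫) x :=
    hdt.hasDerivAt.inner ℝ hdt.hasDerivAt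
  have hev : (fun y => ⟪tang f y, tang f y⟫) =ᶠ[nhds x] (fun _ => (1:ℝ)) := by
    filter_upwards [(isOpen_regSet hf).mem_nhds hx] with y hy
    exact inner_tang_self hy
  have hzero : ⟪tang f x, deriv (tang f) x⟫ + ⟪deriv (tang f) x, tang f x⟫ = 0 := by
    have h1 := hda.deriv
    have h2 : deriv (fun y => ⟪tang f y, tang f y⟫) x = 0 := by
      rw [hev.deriv_eq]; exact deriv_const _ _
    rw [h2] at h1; exact h1.symm
  rw [real_inner_comm (deriv (tang f) x) (tang f x)] at hzero
  have hd0 : ⟪deriv (tang f) x, tang f x⟫ = 0 := by linarith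
  simp only [curv, aD, real_inner_smul_left, hd0, mul_zero]

lemma phi_inner_tang (hf : ContDiff ℝ (⊤ : ℕ∞) f) (j : ℕ) {x : ℝ} (hx : x ∈ regSet f) :
    ⟪nSIter f j (curv f) x, tang f x⟫ = 0 := by
  cases j with
  | zero => exact curv_inner_tang hf hx
  | succ j => exact nS_inner_tang _ hx

/-- Key pointwise identity: pairing the derivative of a field with a normal vector. -/
lemma inner_deriv_eq (g : ℝ → En n) {x : ℝ} (hx : x ∈ regSet f) {ψ : En n}
    (hψ : ⟪ψ, tang f x⟫ = 0) :
    ⟪deriv g x, ψ⟫ = ‖deriv f x‖ * ⟪nS f g x, ψ⟫ := by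
  have hw : ‖deriv f x‖ ≠ 0 := norm_ne_zero_iff.mpr hx
  have hτψ : ⟪tang f x, ψ⟫ = 0 := by rw [real_inner_comm]; exact hψ
  have h1 : ⟪nS f g x, ψ⟫ = ‖deriv f x‖⁻¹ * ⟪deriv g x, ψ⟫ := by
    simp only [nS, aD, inner_sub_left, real_inner_smul_left, hτψ, mul_zero, sub_zero]
  rw [h1, ← mul_assoc, mul_inv_cancel₀ hw, one_mul]

/-- Derivative of the inner product of two iterated normal derivatives. -/
lemma hasDerivAt_inner_phi (hf : ContDiff ℝ (⊤ : ℕ∞) f) (a b : ℕ) {x : ℝ}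
    (hx : x ∈ regSet f) :
    HasDerivAt (fun y => ⟪nSIter f a (curv f) y, nSIter f b (curv f) y⟫)
      (‖deriv f x‖ * (⟪nSIter f (a+1) (curv f) x, nSIter f b (curv f) x⟫
        + ⟪nSIter f a (curv f) x, nSIter f (b+1) (curv f) x⟫)) x := by
  have hda := (diffAt_phi hf a hx).hasDerivAt
  have hdb := (diffAt_phi hf b hx).hasDerivAt
  have H := hda.inner ℝ hdb
  have e1 : ⟪deriv (nSIter f a (curv f)) x, nSIter f b (curv f) x⟫
      = ‖deriv f x‖ * ⟪nSIter f (a+1) (curv f) x, nSIter f b (curv f) x⟫ := by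
    rw [inner_deriv_eq _ hx (phi_inner_tang hf b hx)]
    rfl
  have e2 : ⟪nSIter f a (curv f) x, deriv (nSIter f b (curv f)) x⟫
      = ‖deriv f x‖ * ⟪nSIter f a (curv f) x, nSIter f (b+1) (curv f) x⟫ := by
    rw [real_inner_comm, inner_deriv_eq _ hx (phi_inner_tang hf a hx)]
    rw [real_inner_comm (nSIter f a (curv f) x)]
    rfl
  refine H.congr_deriv ?_
  rw [e1, e2]
  ring


section integrals

variable {f : ℝ → En n}

/-- The L² integral of the j-th normal derivative of curvature. -/
def II (f : ℝ → En n) (j : ℕ) : ℝ :=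
  ∫ x in (0:ℝ)..1, ‖nSIter f j (curv f) x‖^2 * ‖deriv f x‖

def aa (f : ℝ → En n) (j : ℕ) : ℝ := Real.sqrt (II f j)

def XX (f : ℝ → En n) (j : ℕ) : ℝ := (len f)^j * aa f j

lemma cont_w (hf : ContDiff ℝ (⊤ : ℕ∞) f) : Continuous (fun x => ‖deriv f x‖) :=
  (contDiff_infty_iff_deriv.mp hf).2.continuous.norm

lemma contOn_phi_Icc (hf : ContDiff ℝ (⊤ : ℕ∞) f)
    (hreg : Set.Icc (0:ℝ) 1 ⊆ regSet f) (j : ℕ) :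
    ContinuousOn (nSIter f j (curv f)) (Set.Icc (0:ℝ) 1) :=
  ((contDiffOn_phi hf j).continuousOn).mono hreg

lemma uIcc01 : Set.uIcc (0:ℝ) 1 = Set.Icc (0:ℝ) 1 := Set.uIcc_of_le (by norm_num)

lemma intg_pqw (hf : ContDiff ℝ (⊤ : ℕ∞) f) (hreg : Set.Icc (0:ℝ) 1 ⊆ regSet f) (p q : ℕ) :
    IntervalIntegrable
      (fun x => ‖nSIter f p (curv f) x‖ * ‖nSIter f q (curv f) x‖ * ‖deriv f x‖)
      volume 0 1 := by
  apply ContinuousOn.intervalIntegrable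
  rw [uIcc01]
  exact (((contOn_phi_Icc hf hreg p).norm.mul (contOn_phi_Icc hf hreg q).norm).mul
    (cont_w hf).continuousOn)

lemma intg_sqw (hf : ContDiff ℝ (⊤ : ℕ∞) f) (hreg : Set.Icc (0:ℝ) 1 ⊆ regSet f) (p : ℕ) :
    IntervalIntegrable (fun x => ‖nSIter f p (curv f) x‖^2 * ‖deriv f x‖) volume 0 1 := by
  apply ContinuousOn.intervalIntegrable
  rw [uIcc01]
  exact ((contOn_phi_Icc hf hreg p).norm.pow 2).mul (cont_w hf).continuousOn

lemma intg_innerw (hf : ContDiff ℝ (⊤ : ℕ∞) f) (hreg : Set.Icc (0:ℝ) 1 ⊆ regSet f) (p q : ℕ) :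
    IntervalIntegrable
      (fun x => ⟪nSIter f p (curv f) x, nSIter f q (curv f) x⟫ * ‖deriv f x‖) volume 0 1 := by
  apply ContinuousOn.intervalIntegrable
  rw [uIcc01]
  exact ((contOn_phi_Icc hf hreg p).inner (contOn_phi_Icc hf hreg q)).mul
    (cont_w hf).continuousOn

lemma intg_w (hf : ContDiff ℝ (⊤ : ℕ∞) f) :
    IntervalIntegrable (fun x => ‖deriv f x‖) volume 0 1 :=
  (cont_w hf).intervalIntegrable _ _

lemma II_nonneg (f : ℝ → En n) (j : ℕ) : 0 ≤ II f j := by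
  apply intervalIntegral.integral_nonneg (by norm_num : (0:ℝ) ≤ 1)
  intro x _
  positivity

lemma aa_nonneg (f : ℝ → En n) (j : ℕ) : 0 ≤ aa f j := Real.sqrt_nonneg _

lemma aa_sq (f : ℝ → En n) (j : ℕ) : (aa f j)^2 = II f j :=
  Real.sq_sqrt (II_nonneg f j)

lemma len_pos (hf : ContDiff ℝ (⊤ : ℕ∞) f) (hreg : Set.Icc (0:ℝ) 1 ⊆ regSet f) :
    0 < len f := by
  apply intervalIntegral.intervalIntegral_pos_of_pos_on (intg_w hf)
  · intro x hx
    have : x ∈ regSet f := hreg ⟨hx.1.le, hx.2.le⟩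
    exact norm_pos_iff.mpr this
  · norm_num

lemma XX_nonneg (hf : ContDiff ℝ (⊤ : ℕ∞) f) (hreg : Set.Icc (0:ℝ) 1 ⊆ regSet f) (j : ℕ) :
    0 ≤ XX f j :=
  mul_nonneg (pow_nonneg (len_pos hf hreg).le j) (aa_nonneg f j)

/-- Cauchy–Schwarz for the weighted integrals. -/
lemma cs_integral (hf : ContDiff ℝ (⊤ : ℕ∞) f) (hreg : Set.Icc (0:ℝ) 1 ⊆ regSet f) (p q : ℕ) :
    (∫ x in (0:ℝ)..1, ‖nSIter f p (curv f) x‖ * ‖nSIter f q (curv f) x‖ * ‖deriv f x‖)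
      ≤ aa f p * aa f q := by
  apply cs_from_quadratic ?_ (II_nonneg f p) (II_nonneg f q)
  · intro t ht
    have h0 : (0:ℝ) ≤ ∫ x in (0:ℝ)..1,
        (t*‖nSIter f p (curv f) x‖ - ‖nSIter f q (curv f) x‖)^2 * ‖deriv f x‖ := by
      apply intervalIntegral.integral_nonneg (by norm_num : (0:ℝ) ≤ 1)
      intro x _
      positivity
    have expand : (∫ x in (0:ℝ)..1,
        (t*‖nSIter f p (curv f) x‖ - ‖nSIter f q (curv f) x‖)^2 * ‖deriv f x‖)
        = t^2 * II f p
          - 2*t*(∫ x in (0:ℝ)..1, ‖nSIter f p (curv f) x‖ * ‖nSIter f q (curv f) x‖ * ‖deriv f x‖)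
          + II f q := by
      have e : (fun x => (t*‖nSIter f p (curv f) x‖ - ‖nSIter f q (curv f) x‖)^2 * ‖deriv f x‖)
          = fun x => (t^2 * (‖nSIter f p (curv f) x‖^2 * ‖deriv f x‖)
            - 2*t*(‖nSIter f p (curv f) x‖ * ‖nSIter f q (curv f) x‖ * ‖deriv f x‖))
            + ‖nSIter f q (curv f) x‖^2 * ‖deriv f x‖ := by
        funext x; ring
      rw [e]
      rw [intervalIntegral.integral_add (((intg_sqw hf hreg p).const_mul _).sub
        ((intg_pqw hf hreg p q).const_mul _)) (intg_sqw hf hreg q)]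
      rw [intervalIntegral.integral_sub ((intg_sqw hf hreg p).const_mul _)
        ((intg_pqw hf hreg p q).const_mul _)]
      rw [intervalIntegral.integral_const_mul, intervalIntegral.integral_const_mul]
      rfl
    rw [expand] at h0
    linarith
  · apply intervalIntegral.integral_nonneg (by norm_num : (0:ℝ) ≤ 1)
    intro x _
    positivity


lemma pq_le {p q t : ℝ} (ht : 0 < t) :
    p*q ≤ (1/(2*t))*p^2 + (t/2)*q^2 := by
  have h2 : 2*t*(p*q) ≤ p^2 + t^2*q^2 := by nlinarith [sq_nonneg (p - t*q), ht]
  have h3 := mul_le_mul_of_nonneg_left h2 (by positivity : (0:ℝ) ≤ 1/(2*t))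
  calc p*q = (1/(2*t))*(2*t*(p*q)) := by field_simp
    _ ≤ (1/(2*t))*(p^2 + t^2*q^2) := h3
    _ = (1/(2*t))*p^2 + (t/2)*q^2 := by field_simp

/-- Sup bound on the square of a normal field via its integral and next derivative. -/
lemma sup_bound (hf : ContDiff ℝ (⊤ : ℕ∞) f) (hreg : Set.Icc (0:ℝ) 1 ⊆ regSet f) (j : ℕ)
    {z : ℝ} (hz : z ∈ Set.Icc (0:ℝ) 1) :
    ‖nSIter f j (curv f) z‖^2 ≤ (len f)⁻¹ * II f j + 2*(aa f (j+1) * aa f j) := by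
  have hL := len_pos hf hreg
  set h : ℝ → ℝ := fun y => ⟪nSIter f j (curv f) y, nSIter f j (curv f) y⟫ with hh
  have hhval : ∀ y, h y = ‖nSIter f j (curv f) y‖^2 := fun y => real_inner_self_eq_norm_sq _
  have hcont : ContinuousOn h (Set.Icc 0 1) :=
    (contOn_phi_Icc hf hreg j).inner (contOn_phi_Icc hf hreg j)
  obtain ⟨y₀, hy₀, hmin⟩ := isCompact_Icc.exists_isMinOn
    (Set.nonempty_Icc.mpr (by norm_num)) hcont
  have hy₀b : h y₀ * len f ≤ II f j := by
    have hle : ∀ x ∈ Set.Icc (0:ℝ) 1,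
        h y₀ * ‖deriv f x‖ ≤ ‖nSIter f j (curv f) x‖^2 * ‖deriv f x‖ := by
      intro x hx
      have hmx : h y₀ ≤ h x := hmin hx
      rw [hhval x] at hmx
      exact mul_le_mul_of_nonneg_right hmx (norm_nonneg _)
    have hint := intervalIntegral.integral_mono_on (by norm_num : (0:ℝ) ≤ 1)
      ((intg_w hf).const_mul _) (intg_sqw hf hreg j) hle
    rwa [intervalIntegral.integral_const_mul] at hint
  have hy₀' : h y₀ ≤ (len f)⁻¹ * II f j := by
    have h4 := mul_le_mul_of_nonneg_left hy₀b (inv_nonneg.mpr hL.le)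
    calc h y₀ = (len f)⁻¹ * (h y₀ * len f) := by field_simp
      _ ≤ (len f)⁻¹ * II f j := h4
  set g' : ℝ → ℝ := fun y => ‖deriv f y‖ * (⟪nSIter f (j+1) (curv f) y, nSIter f j (curv f) y⟫
      + ⟪nSIter f j (curv f) y, nSIter f (j+1) (curv f) y⟫) with hg'
  have hsubz : Set.uIcc y₀ z ⊆ Set.Icc (0:ℝ) 1 := by
    rw [← uIcc01]
    exact Set.uIcc_subset_uIcc (by rwa [uIcc01]) (by rwa [uIcc01])
  have hcontg' : ContinuousOn g' (Set.Icc (0:ℝ) 1) :=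
    (cont_w hf).continuousOn.mul (((contOn_phi_Icc hf hreg (j+1)).inner
      (contOn_phi_Icc hf hreg j)).add ((contOn_phi_Icc hf hreg j).inner
      (contOn_phi_Icc hf hreg (j+1))))
  have hintg01 : IntervalIntegrable g' volume 0 1 := by
    apply ContinuousOn.intervalIntegrable
    rwa [uIcc01]
  have hftc : ∫ y in y₀..z, g' y = h z - h y₀ := by
    apply intervalIntegral.integral_eq_sub_of_hasDerivAt
    · intro y hy
      exact hasDerivAt_inner_phi hf j j (hreg (hsubz hy))
    · exact (hcontg'.mono hsubz).intervalIntegrable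
  have hbound : |∫ y in y₀..z, g' y| ≤ 2*(aa f (j+1) * aa f j) := by
    have habs1 : |∫ y in y₀..z, g' y| ≤ |(∫ y in y₀..z, |g' y|)| := by
      simpa only [Real.norm_eq_abs] using
        intervalIntegral.norm_integral_le_abs_integral_norm (f := g') (a := y₀) (b := z)
          (μ := volume)
    have hIsub : Set.uIoc y₀ z ⊆ Set.uIoc (0:ℝ) 1 := by
      apply Set.uIoc_subset_uIoc_of_uIcc_subset_uIcc
      rwa [uIcc01]
    have habs2 : |(∫ y in y₀..z, |g' y|)| ≤ |(∫ y in (0:ℝ)..1, |g' y|)| := by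
      apply intervalIntegral.abs_integral_mono_interval hIsub
      · exact Filter.Eventually.of_forall (fun y => abs_nonneg _)
      · exact hintg01.abs
    have habs3 : |(∫ y in (0:ℝ)..1, |g' y|)| = ∫ y in (0:ℝ)..1, |g' y| := by
      apply abs_of_nonneg
      apply intervalIntegral.integral_nonneg (by norm_num : (0:ℝ) ≤ 1)
      intro y _
      exact abs_nonneg _
    have hptw : ∀ y ∈ Set.Icc (0:ℝ) 1, |g' y| ≤
        2*(‖nSIter f (j+1) (curv f) y‖ * ‖nSIter f j (curv f) y‖ * ‖deriv f y‖) := by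
      intro y _
      have h1 : |⟪nSIter f (j+1) (curv f) y, nSIter f j (curv f) y⟫|
          ≤ ‖nSIter f (j+1) (curv f) y‖ * ‖nSIter f j (curv f) y‖ := abs_real_inner_le_norm _ _
      have h2 : |⟪nSIter f j (curv f) y, nSIter f (j+1) (curv f) y⟫|
          ≤ ‖nSIter f j (curv f) y‖ * ‖nSIter f (j+1) (curv f) y‖ := abs_real_inner_le_norm _ _
      have e : |g' y| = ‖deriv f y‖ * |⟪nSIter f (j+1) (curv f) y, nSIter f j (curv f) y⟫
          + ⟪nSIter f j (curv f) y, nSIter f (j+1) (curv f) y⟫| := by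
        rw [hg', abs_mul, abs_of_nonneg (norm_nonneg _)]
      rw [e]
      rw [mul_comm] at h2
      have h3 := abs_add_le (⟪nSIter f (j+1) (curv f) y, nSIter f j (curv f) y⟫)
        (⟪nSIter f j (curv f) y, nSIter f (j+1) (curv f) y⟫)
      have h5 : |⟪nSIter f (j+1) (curv f) y, nSIter f j (curv f) y⟫
          + ⟪nSIter f j (curv f) y, nSIter f (j+1) (curv f) y⟫|
          ≤ 2*(‖nSIter f (j+1) (curv f) y‖ * ‖nSIter f j (curv f) y‖) := by linarith
      have h4 := norm_nonneg (deriv f y)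
      calc ‖deriv f y‖ * |⟪nSIter f (j+1) (curv f) y, nSIter f j (curv f) y⟫
          + ⟪nSIter f j (curv f) y, nSIter f (j+1) (curv f) y⟫|
          ≤ ‖deriv f y‖ * (2*(‖nSIter f (j+1) (curv f) y‖ * ‖nSIter f j (curv f) y‖)) :=
            mul_le_mul_of_nonneg_left h5 h4
        _ = 2*(‖nSIter f (j+1) (curv f) y‖ * ‖nSIter f j (curv f) y‖ * ‖deriv f y‖) := by ring
    have hintabs : IntervalIntegrable (fun y => |g' y|) volume 0 1 := hintg01.abs
    have hmono := intervalIntegral.integral_mono_on (by norm_num : (0:ℝ) ≤ 1) hintabs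
      ((intg_pqw hf hreg (j+1) j).const_mul 2) hptw
    rw [intervalIntegral.integral_const_mul] at hmono
    have hcs := cs_integral hf hreg (j+1) j
    calc |∫ y in y₀..z, g' y| ≤ |(∫ y in (0:ℝ)..1, |g' y|)| := habs1.trans habs2
      _ = ∫ y in (0:ℝ)..1, |g' y| := habs3
      _ ≤ 2 * ∫ x in (0:ℝ)..1, ‖nSIter f (j+1) (curv f) x‖ * ‖nSIter f j (curv f) x‖
          * ‖deriv f x‖ := hmono
      _ ≤ 2*(aa f (j+1) * aa f j) := by linarith
  calc ‖nSIter f j (curv f) z‖^2 = h z := (hhval z).symm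
    _ = h y₀ + (∫ y in y₀..z, g' y) := by linarith [hftc]
    _ ≤ (len f)⁻¹ * II f j + |∫ y in y₀..z, g' y| := by
        have := le_abs_self (∫ y in y₀..z, g' y)
        linarith
    _ ≤ (len f)⁻¹ * II f j + 2*(aa f (j+1) * aa f j) := by linarith


/-- Integration by parts identity. -/
lemma ibp (hf : ContDiff ℝ (⊤ : ℕ∞) f) (hreg : Set.Icc (0:ℝ) 1 ⊆ regSet f) (m : ℕ) :
    II f (m+1) = ⟪nSIter f (m+1) (curv f) 1, nSIter f m (curv f) 1⟫
      - ⟪nSIter f (m+1) (curv f) 0, nSIter f m (curv f) 0⟫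
      - ∫ x in (0:ℝ)..1, ⟪nSIter f (m+2) (curv f) x, nSIter f m (curv f) x⟫ * ‖deriv f x‖ := by
  set g' : ℝ → ℝ := fun y => ‖deriv f y‖ * (⟪nSIter f (m+2) (curv f) y, nSIter f m (curv f) y⟫
      + ⟪nSIter f (m+1) (curv f) y, nSIter f (m+1) (curv f) y⟫) with hg'
  have hcontg' : ContinuousOn g' (Set.Icc (0:ℝ) 1) :=
    (cont_w hf).continuousOn.mul (((contOn_phi_Icc hf hreg (m+2)).inner
      (contOn_phi_Icc hf hreg m)).add ((contOn_phi_Icc hf hreg (m+1)).inner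
      (contOn_phi_Icc hf hreg (m+1))))
  have hintg01 : IntervalIntegrable g' volume 0 1 := by
    apply ContinuousOn.intervalIntegrable
    rwa [uIcc01]
  have hftc0 := intervalIntegral.integral_eq_sub_of_hasDerivAt
      (f := fun y => ⟪nSIter f (m+1) (curv f) y, nSIter f m (curv f) y⟫) (f' := g')
      (a := 0) (b := 1)
      (fun y hy => by
        rw [uIcc01] at hy
        simpa only [hg', show m+1+1 = m+2 from rfl] using
          hasDerivAt_inner_phi hf (m+1) m (hreg hy))
      hintg01
  have hftc : ∫ y in (0:ℝ)..1, g' y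
      = ⟪nSIter f (m+1) (curv f) 1, nSIter f m (curv f) 1⟫
        - ⟪nSIter f (m+1) (curv f) 0, nSIter f m (curv f) 0⟫ := hftc0
  have hsplit : ∫ y in (0:ℝ)..1, g' y
      = (∫ x in (0:ℝ)..1, ⟪nSIter f (m+2) (curv f) x, nSIter f m (curv f) x⟫ * ‖deriv f x‖)
        + II f (m+1) := by
    have e : g' = fun y =>
        (⟪nSIter f (m+2) (curv f) y, nSIter f m (curv f) y⟫ * ‖deriv f y‖)
        + ‖nSIter f (m+1) (curv f) y‖^2 * ‖deriv f y‖ := by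
      funext y
      simp only [hg', real_inner_self_eq_norm_sq]
      ring
    rw [e, intervalIntegral.integral_add (intg_innerw hf hreg (m+2) m) (intg_sqw hf hreg (m+1))]
    rfl
  rw [hsplit] at hftc
  linarith

/-- The key interpolation inequality, with free parameter t. -/
lemma key_t (hf : ContDiff ℝ (⊤ : ℕ∞) f) (hreg : Set.Icc (0:ℝ) 1 ⊆ regSet f) (m : ℕ)
    {t : ℝ} (ht : 0 < t) :
    II f (m+1) ≤ (1/t)*((len f)⁻¹*II f (m+1) + 2*(aa f (m+2)*aa f (m+1)))
      + t*((len f)⁻¹*II f m + 2*(aa f (m+1)*aa f m)) + aa f (m+2)*aa f m := by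
  set U := (len f)⁻¹*II f (m+1) + 2*(aa f (m+2)*aa f (m+1)) with hU
  set V := (len f)⁻¹*II f m + 2*(aa f (m+1)*aa f m) with hV
  have hbd : ∀ z ∈ Set.Icc (0:ℝ) 1,
      |⟪nSIter f (m+1) (curv f) z, nSIter f m (curv f) z⟫| ≤ (1/(2*t))*U + (t/2)*V := by
    intro z hz
    have h1 : |⟪nSIter f (m+1) (curv f) z, nSIter f m (curv f) z⟫|
        ≤ ‖nSIter f (m+1) (curv f) z‖ * ‖nSIter f m (curv f) z‖ := abs_real_inner_le_norm _ _
    have h2 := pq_le (p := ‖nSIter f (m+1) (curv f) z‖) (q := ‖nSIter f m (curv f) z‖) ht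
    have h3 := sup_bound hf hreg (m+1) hz
    have h4 := sup_bound hf hreg m hz
    have h5 : (1/(2*t))*(‖nSIter f (m+1) (curv f) z‖^2) ≤ (1/(2*t))*U := by
      apply mul_le_mul_of_nonneg_left _ (by positivity)
      rw [hU]
      simpa only [show m+1+1 = m+2 from rfl] using h3
    have h6 : (t/2)*(‖nSIter f m (curv f) z‖^2) ≤ (t/2)*V := by
      apply mul_le_mul_of_nonneg_left _ (by positivity)
      rw [hV]
      exact h4
    linarith
  have hb0 := hbd 0 (by norm_num)
  have hb1 := hbd 1 (by norm_num)
  have hint : -(∫ x in (0:ℝ)..1, ⟪nSIter f (m+2) (curv f) x, nSIter f m (curv f) x⟫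
      * ‖deriv f x‖) ≤ aa f (m+2) * aa f m := by
    have habs : |∫ x in (0:ℝ)..1, ⟪nSIter f (m+2) (curv f) x, nSIter f m (curv f) x⟫
        * ‖deriv f x‖| ≤ ∫ x in (0:ℝ)..1,
          |⟪nSIter f (m+2) (curv f) x, nSIter f m (curv f) x⟫ * ‖deriv f x‖| :=
      intervalIntegral.abs_integral_le_integral_abs (by norm_num)
    have hptw : ∀ x ∈ Set.Icc (0:ℝ) 1,
        |⟪nSIter f (m+2) (curv f) x, nSIter f m (curv f) x⟫ * ‖deriv f x‖|
        ≤ ‖nSIter f (m+2) (curv f) x‖ * ‖nSIter f m (curv f) x‖ * ‖deriv f x‖ := by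
      intro x _
      rw [abs_mul, abs_of_nonneg (norm_nonneg _)]
      exact mul_le_mul_of_nonneg_right (abs_real_inner_le_norm _ _) (norm_nonneg _)
    have hintabs : IntervalIntegrable (fun x =>
        |⟪nSIter f (m+2) (curv f) x, nSIter f m (curv f) x⟫ * ‖deriv f x‖|) volume 0 1 :=
      (intg_innerw hf hreg (m+2) m).abs
    have hmono := intervalIntegral.integral_mono_on (by norm_num : (0:ℝ) ≤ 1) hintabs
      (intg_pqw hf hreg (m+2) m) hptw
    have hcs := cs_integral hf hreg (m+2) m
    have := neg_abs_le (∫ x in (0:ℝ)..1,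
      ⟪nSIter f (m+2) (curv f) x, nSIter f m (curv f) x⟫ * ‖deriv f x‖)
    linarith
  have hIBP := ibp hf hreg m
  have e1 := abs_nonneg (⟪nSIter f (m+1) (curv f) 1, nSIter f m (curv f) 1⟫)
  have hle1 := le_abs_self (⟪nSIter f (m+1) (curv f) 1, nSIter f m (curv f) 1⟫)
  have hle0 := neg_abs_le (⟪nSIter f (m+1) (curv f) 0, nSIter f m (curv f) 0⟫)
  have e2 : (1/t) = 2*(1/(2*t)) := by field_simp
  calc II f (m+1) ≤ |⟪nSIter f (m+1) (curv f) 1, nSIter f m (curv f) 1⟫|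
        + |⟪nSIter f (m+1) (curv f) 0, nSIter f m (curv f) 0⟫|
        + aa f (m+2)*aa f m := by linarith
    _ ≤ ((1/(2*t))*U + (t/2)*V) + ((1/(2*t))*U + (t/2)*V) + aa f (m+2)*aa f m := by
        linarith
    _ = (1/t)*U + t*V + aa f (m+2)*aa f m := by
        field_simp
        ring


/-- The key inequality in scale-invariant form. -/
lemma key_XX (hf : ContDiff ℝ (⊤ : ℕ∞) f) (hreg : Set.Icc (0:ℝ) 1 ⊆ regSet f) (m : ℕ)
    {s : ℝ} (hs : 0 < s) :
    (XX f (m+1))^2 ≤ s⁻¹*((XX f (m+1))^2 + 2*(XX f (m+1))*(XX f (m+2)))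
      + s*((XX f m)^2 + 2*(XX f (m+1))*(XX f m)) + (XX f (m+2))*(XX f m) := by
  have hL := len_pos hf hreg
  have ht : 0 < s / len f := div_pos hs hL
  have hkey := key_t hf hreg m ht
  have hpow : (0:ℝ) < (len f)^(2*m+2) := pow_pos hL _
  have hmul := mul_le_mul_of_nonneg_left hkey hpow.le
  have hIm : II f m = (aa f m)^2 := (aa_sq f m).symm
  have hIm1 : II f (m+1) = (aa f (m+1))^2 := (aa_sq f (m+1)).symm
  rw [hIm, hIm1] at hmul
  have hXm : XX f m = (len f)^m * aa f m := rfl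
  have hXm1 : XX f (m+1) = (len f)^(m+1) * aa f (m+1) := rfl
  have hXm2 : XX f (m+2) = (len f)^(m+2) * aa f (m+2) := rfl
  rw [hXm, hXm1, hXm2]
  set L := len f with hLdef
  set A := aa f m
  set B := aa f (m+1)
  set C := aa f (m+2)
  have hL0 : L ≠ 0 := ne_of_gt hL
  have hs0 : s ≠ 0 := ne_of_gt hs
  have eLHS : (L^(m+1)*B)^2 = L^(2*m+2)*B^2 := by ring
  have eRHS : L^(2*m+2)*((1/(s/L))*(L⁻¹*B^2 + 2*(C*B)) + (s/L)*(L⁻¹*A^2+2*(B*A)) + C*A)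
      = s⁻¹*((L^(m+1)*B)^2 + 2*(L^(m+1)*B)*(L^(m+2)*C))
        + s*((L^m*A)^2 + 2*(L^(m+1)*B)*(L^m*A)) + (L^(m+2)*C)*(L^m*A) := by
    field_simp
    ring
  linarith [hmul, eLHS, eRHS]

/-- The ε-step for the scale invariant quantities. -/
lemma hstep_XX (hf : ContDiff ℝ (⊤ : ℕ∞) f) (hreg : Set.Icc (0:ℝ) 1 ⊆ regSet f) :
    ∀ i : ℕ, ∀ ε : ℝ, 0 < ε → ε ≤ 1/2 →
      XX f (i+1) ≤ ε * XX f (i+2) + (225/ε) * XX f i := by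
  intro i ε hε hε2
  exact eps_step (XX_nonneg hf hreg i) (XX_nonneg hf hreg (i+1)) (XX_nonneg hf hreg (i+2))
    (fun s hs => key_XX hf hreg i hs) hε hε2

end integrals

end analysis

/-- `‖κ‖ₖ,₂ ≤ C(‖∇ₛᵏκ‖₂ + ‖κ‖₂)` with `C = C(n,k)`. -/
theorem sobolev_norm_curvature_bound (n k : ℕ) (hn : 2 ≤ n) :
    ∃ C : ℝ, 0 < C ∧
      ∀ f : ℝ → En n, ContDiff ℝ (⊤ : ℕ∞) f →
        (∀ x ∈ Set.Icc (0:ℝ) 1, deriv f x ≠ 0) →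
        sNk f k (curv f) ≤ C * (sN f 2 k (curv f) + sN f 2 0 (curv f)) := by
  refine ⟨(k+1) * (2*((10^6:ℝ)^((k+1)^2) * 4^(k+1)) + 1), by positivity, ?_⟩
  intro f hf hreg'
  have hreg : Set.Icc (0:ℝ) 1 ⊆ regSet f := fun x hx => hreg' x hx
  have hL := len_pos hf hreg
  have hchain := chain_lemma (XX f) (XX_nonneg hf hreg) (hstep_XX hf hreg) k
  have hsN : ∀ i : ℕ, sN f 2 i (curv f) = (len f) ^ ((1:ℝ)/2) * XX f i := by
    intro i
    have hint : (∫ x in (0:ℝ)..1, ‖nSIter f i (curv f) x‖ ^ (2:ℝ) * ‖deriv f x‖) = II f i := by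
      apply intervalIntegral.integral_congr
      intro x _
      show ‖nSIter f i (curv f) x‖ ^ (2:ℝ) * ‖deriv f x‖
          = ‖nSIter f i (curv f) x‖ ^ 2 * ‖deriv f x‖
      rw [show ((2:ℝ)) = ((2:ℕ):ℝ) by norm_num, Real.rpow_natCast]
    simp only [sN]
    rw [hint]
    have e : ((i:ℝ) + 1 - 1/2) = (i:ℝ) + 1/2 := by ring
    rw [e, Real.rpow_add hL, Real.rpow_natCast]
    simp only [← Real.sqrt_eq_rpow]
    simp only [XX, aa]
    ring
  have hsum : sNk f k (curv f) = (len f)^((1:ℝ)/2) * ∑ i ∈ Finset.range (k+1), XX f i := by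
    simp only [sNk]
    rw [Finset.mul_sum]
    exact Finset.sum_congr rfl (fun i _ => hsN i)
  rw [hsum, hsN k, hsN 0]
  have hhalf : (0:ℝ) ≤ (len f)^((1:ℝ)/2) := Real.rpow_nonneg hL.le _
  calc (len f)^((1:ℝ)/2) * ∑ i ∈ Finset.range (k+1), XX f i
      ≤ (len f)^((1:ℝ)/2) * (((k+1) * (2*((10^6:ℝ)^((k+1)^2) * 4^(k+1)) + 1)) * (XX f 0 + XX f k)) :=
        mul_le_mul_of_nonneg_left hchain hhalf
    _ = ((k+1) * (2*((10^6:ℝ)^((k+1)^2) * 4^(k+1)) + 1)) *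
        ((len f)^((1:ℝ)/2) * XX f k + (len f)^((1:ℝ)/2) * XX f 0) := by ring


end
end

section
/- Let n ≥ 2, m ≥ 1, Λ > 0 and C₀ > 0. There exists a constant C, depending only on n, m, Λ and C₀, such that for every smooth regular curve f : [0,1] → ℝⁿ with curvature vector κ satisfying L[f] ≥ Λ, ‖κ‖_{L²} ≤ C₀ and ‖∇ₛᵐκ‖_{L²} ≤ C₀, one has ‖∂ₛˡκ‖_{L²} ≤ C for every 0 ≤ l ≤ m, where ∂ₛˡκ denotes the full l-th arc-length derivative of κ. -/
open scoped RealInnerProductSpace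
open MeasureTheory

noncomputable section

variable {n : ℕ}

set_option linter.unusedSectionVars false
open scoped ContDiff
open Set

-- ==================== auxiliary development ====================

structure Reg (f : ℝ → En n) : Prop where
  smooth : ContDiff ℝ (⊤ : ℕ∞) f
  reg : ∀ x ∈ Set.Icc (0:ℝ) 1, deriv f x ≠ 0

def US (f : ℝ → En n) : Set ℝ := {x | deriv f x ≠ 0}

def uu (f : ℝ → En n) : ℝ → ℝ := fun x => ‖deriv f x‖

def NV (f : ℝ → En n) (l : ℕ) : ℝ → En n := nSIter f l (curv f)

def EE (f : ℝ → En n) (l : ℕ) : ℝ := ∫ x in (0:ℝ)..1, ‖NV f l x‖ ^ 2 * ‖deriv f x‖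

namespace Reg

variable {f : ℝ → En n} (hf : Reg f)
include hf

lemma contDiff_deriv : ContDiff ℝ (⊤ : ℕ∞) (deriv f) := by
  exact (contDiff_infty_iff_deriv.mp hf.smooth).2

lemma isOpen_US : IsOpen (US f) := by
  have : Continuous (deriv f) := hf.contDiff_deriv.continuous
  exact isOpen_ne_fun this continuous_const

lemma icc_subset : Set.Icc (0:ℝ) 1 ⊆ US f := fun x hx => hf.reg x hx

lemma contDiffOn_aD {g : ℝ → En n} (hg : ContDiffOn ℝ (⊤ : ℕ∞) g (US f)) :
    ContDiffOn ℝ (⊤ : ℕ∞) (aD f g) (US f) := by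
  have hderiv : ContDiffOn ℝ (⊤ : ℕ∞) (deriv g) (US f) := by
    exact hg.deriv_of_isOpen (m := ∞) hf.isOpen_US (le_refl _)
  have hinv : ContDiffOn ℝ (⊤ : ℕ∞) (fun x => ‖deriv f x‖⁻¹) (US f) := by
    intro x hx
    have h1 : ContDiffAt ℝ (⊤ : ℕ∞) (deriv f) x := hf.contDiff_deriv.contDiffAt
    have h2 : ContDiffAt ℝ (⊤ : ℕ∞) (fun y => ‖deriv f y‖) x := h1.norm ℝ hx
    exact (h2.inv (norm_ne_zero_iff.mpr hx)).contDiffWithinAt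
  exact hinv.smul hderiv

lemma contDiffOn_tang : ContDiffOn ℝ (⊤ : ℕ∞) (tang f) (US f) :=
  hf.contDiffOn_aD (hf.smooth.contDiffOn)

lemma contDiffOn_NV : ∀ l, ContDiffOn ℝ (⊤ : ℕ∞) (NV f l) (US f) := by
  have hcurv : ContDiffOn ℝ (⊤ : ℕ∞) (curv f) (US f) := hf.contDiffOn_aD hf.contDiffOn_tang
  intro l
  induction l with
  | zero => exact hcurv
  | succ k ih =>
    show ContDiffOn ℝ (⊤ : ℕ∞) (nS f (NV f k)) (US f)
    have h1 := hf.contDiffOn_aD ih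
    have h2 := hf.contDiffOn_tang
    exact (h1.sub (((h1.inner ℝ h2)).smul h2))

lemma contDiffOn_F : ∀ l, ContDiffOn ℝ (⊤ : ℕ∞) (aDIter f l (curv f)) (US f) := by
  intro l
  induction l with
  | zero => exact hf.contDiffOn_aD hf.contDiffOn_tang
  | succ k ih => exact hf.contDiffOn_aD ih

lemma uu_pos {x : ℝ} (hx : x ∈ US f) : 0 < uu f x := norm_pos_iff.mpr hx

/-- generic: a function smooth on `US f` has the arclength-derivative as honest derivative -/
lemma hasDerivAt_of_contDiffOn {g : ℝ → En n} (hg : ContDiffOn ℝ (⊤ : ℕ∞) g (US f))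
    {x : ℝ} (hx : x ∈ US f) : HasDerivAt g (uu f x • aD f g x) x := by
  have hd : DifferentiableAt ℝ g x := by
    have := (hg x hx).differentiableWithinAt (by simp)
    exact this.differentiableAt (hf.isOpen_US.mem_nhds hx)
  have : uu f x • aD f g x = deriv g x := by
    simp only [aD, uu, smul_smul]
    rw [mul_inv_cancel₀ (norm_ne_zero_iff.mpr hx), one_smul]
  rw [this]
  exact hd.hasDerivAt

lemma norm_tang {x : ℝ} (hx : x ∈ US f) : ‖tang f x‖ = 1 := by
  simp only [tang, aD, norm_smul, norm_inv, norm_norm]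
  rw [inv_mul_cancel₀ (norm_ne_zero_iff.mpr hx)]

lemma hasDerivAt_tang {x : ℝ} (hx : x ∈ US f) :
    HasDerivAt (tang f) (uu f x • curv f x) x :=
  hf.hasDerivAt_of_contDiffOn hf.contDiffOn_tang hx

lemma inner_curv_tang {x : ℝ} (hx : x ∈ US f) : ⟪curv f x, tang f x⟫ = 0 := by
  -- differentiate ⟪tang, tang⟫ = 1 on the open set US f
  have hG : ∀ y ∈ US f, (fun y => ⟪tang f y, tang f y⟫) y = (fun _ => (1:ℝ)) y := by
    intro y hy
    simp only [real_inner_self_eq_norm_sq]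
    rw [hf.norm_tang hy]; norm_num
  have hderiv : HasDerivAt (fun y => ⟪tang f y, tang f y⟫)
      (⟪tang f x, uu f x • curv f x⟫ + ⟪uu f x • curv f x, tang f x⟫) x :=
    (hf.hasDerivAt_tang hx).inner ℝ (hf.hasDerivAt_tang hx)
  have hEq : (fun y => ⟪tang f y, tang f y⟫) =ᶠ[nhds x] (fun _ => (1:ℝ)) :=
    Filter.eventuallyEq_of_mem (hf.isOpen_US.mem_nhds hx) hG
  have h0 : deriv (fun y => ⟪tang f y, tang f y⟫) x = 0 := by
    rw [hEq.deriv_eq]; exact deriv_const x 1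
  rw [hderiv.deriv] at h0
  rw [real_inner_smul_left, real_inner_smul_right, real_inner_comm] at h0
  have hu := hf.uu_pos hx
  nlinarith [h0, hu]


lemma NV_zero : NV f 0 = curv f := rfl

lemma inner_NV_tang : ∀ (l : ℕ), ∀ x ∈ US f, ⟪NV f l x, tang f x⟫ = 0 := by
  intro l x hx
  cases l with
  | zero => exact hf.inner_curv_tang hx
  | succ k =>
    show ⟪nS f (NV f k) x, tang f x⟫ = 0
    simp only [nS, inner_sub_left, real_inner_smul_left]
    rw [real_inner_self_eq_norm_sq, hf.norm_tang hx]
    ring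

lemma coef_eq (l : ℕ) {x : ℝ} (hx : x ∈ US f) :
    ⟪aD f (NV f l) x, tang f x⟫ = -⟪NV f l x, NV f 0 x⟫ := by
  have hD : HasDerivAt (fun y => ⟪NV f l y, tang f y⟫)
      (⟪NV f l x, uu f x • curv f x⟫ + ⟪uu f x • aD f (NV f l) x, tang f x⟫) x :=
    (hf.hasDerivAt_of_contDiffOn (hf.contDiffOn_NV l) hx).inner ℝ (hf.hasDerivAt_tang hx)
  have hEq : (fun y => ⟪NV f l y, tang f y⟫) =ᶠ[nhds x] (fun _ => (0:ℝ)) :=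
    Filter.eventuallyEq_of_mem (hf.isOpen_US.mem_nhds hx) (fun y hy => hf.inner_NV_tang l y hy)
  have h0 : deriv (fun y => ⟪NV f l y, tang f y⟫) x = 0 := by
    rw [hEq.deriv_eq]; exact deriv_const x 0
  rw [hD.deriv] at h0
  rw [real_inner_smul_right, real_inner_smul_left] at h0
  have hu := hf.uu_pos hx
  have : uu f x * (⟪NV f l x, curv f x⟫ + ⟪aD f (NV f l) x, tang f x⟫) = 0 := by ring_nf; linarith
  rcases mul_eq_zero.mp this with h | h
  · exact absurd h hu.ne'
  · have hz : NV f 0 = curv f := rfl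
    rw [hz]; linarith

lemma aD_NV_eq (l : ℕ) {x : ℝ} (hx : x ∈ US f) :
    aD f (NV f l) x = NV f (l+1) x - ⟪NV f l x, NV f 0 x⟫ • tang f x := by
  have : NV f (l+1) x = aD f (NV f l) x - ⟪aD f (NV f l) x, tang f x⟫ • tang f x := rfl
  rw [this, hf.coef_eq l hx, neg_smul, sub_neg_eq_add, add_sub_cancel_right]

lemma hasDerivAt_NV (l : ℕ) {x : ℝ} (hx : x ∈ US f) :
    HasDerivAt (NV f l)
      (uu f x • NV f (l+1) x - (uu f x * ⟪NV f l x, NV f 0 x⟫) • tang f x) x := by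
  have h := hf.hasDerivAt_of_contDiffOn (hf.contDiffOn_NV l) hx
  rw [hf.aD_NV_eq l hx, smul_sub, smul_smul] at h
  exact h

lemma hasDerivAt_inner_NV (i j : ℕ) {x : ℝ} (hx : x ∈ US f) :
    HasDerivAt (fun y => ⟪NV f i y, NV f j y⟫)
      (uu f x * (⟪NV f (i+1) x, NV f j x⟫ + ⟪NV f i x, NV f (j+1) x⟫)) x := by
  have h := (hf.hasDerivAt_NV i hx).inner ℝ (hf.hasDerivAt_NV j hx)
  have e1 : ⟪NV f i x, uu f x • NV f (j+1) x - (uu f x * ⟪NV f j x, NV f 0 x⟫) • tang f x⟫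
      = uu f x * ⟪NV f i x, NV f (j+1) x⟫ := by
    rw [inner_sub_right, real_inner_smul_right, real_inner_smul_right,
      hf.inner_NV_tang i x hx]
    ring
  have e2 : ⟪uu f x • NV f (i+1) x - (uu f x * ⟪NV f i x, NV f 0 x⟫) • tang f x, NV f j x⟫
      = uu f x * ⟪NV f (i+1) x, NV f j x⟫ := by
    rw [inner_sub_left, real_inner_smul_left, real_inner_smul_left]
    rw [show ⟪tang f x, NV f j x⟫ = (0:ℝ) from by
      rw [real_inner_comm]; exact hf.inner_NV_tang j x hx]
    ring
  rw [e1, e2] at h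
  exact h.congr_deriv (by ring)

lemma continuousOn_NV (l : ℕ) : ContinuousOn (NV f l) (Set.Icc (0:ℝ) 1) :=
  ((hf.contDiffOn_NV l).continuousOn).mono hf.icc_subset

lemma continuousOn_F (l : ℕ) : ContinuousOn (aDIter f l (curv f)) (Set.Icc (0:ℝ) 1) :=
  ((hf.contDiffOn_F l).continuousOn).mono hf.icc_subset

lemma continuous_uu : Continuous (uu f) := hf.contDiff_deriv.continuous.norm

lemma uu_nonneg (x : ℝ) : 0 ≤ uu f x := norm_nonneg _

end Reg

lemma intInt {φ : ℝ → ℝ} (hφ : ContinuousOn φ (Set.Icc (0:ℝ) 1)) :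
    IntervalIntegrable φ volume 0 1 := by
  apply ContinuousOn.intervalIntegrable
  rwa [Set.uIcc_of_le (by norm_num : (0:ℝ) ≤ 1)]

lemma EE_nonneg (f : ℝ → En n) (l : ℕ) : 0 ≤ EE f l :=
  intervalIntegral.integral_nonneg (by norm_num) (fun x _ => by positivity)

section Integrals

variable {f : ℝ → En n} (hf : Reg f)
include hf

lemma cs_sq {φ ψ : ℝ → ℝ} (hφ : ContinuousOn φ (Set.Icc (0:ℝ) 1))
    (hψ : ContinuousOn ψ (Set.Icc (0:ℝ) 1)) :
    (∫ x in (0:ℝ)..1, φ x * ψ x * uu f x) ^ 2 ≤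
      (∫ x in (0:ℝ)..1, φ x ^ 2 * uu f x) * (∫ x in (0:ℝ)..1, ψ x ^ 2 * uu f x) := by
  have hu : ContinuousOn (uu f) (Set.Icc (0:ℝ) 1) := hf.continuous_uu.continuousOn
  have i1 : IntervalIntegrable (fun x => φ x ^ 2 * uu f x) volume 0 1 :=
    intInt (((hφ.pow 2).mul hu))
  have i2 : IntervalIntegrable (fun x => ψ x ^ 2 * uu f x) volume 0 1 :=
    intInt (((hψ.pow 2).mul hu))
  have i12 : IntervalIntegrable (fun x => φ x * ψ x * uu f x) volume 0 1 :=
    intInt (((hφ.mul hψ).mul hu))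
  set P := ∫ x in (0:ℝ)..1, φ x ^ 2 * uu f x with hP
  set Q := ∫ x in (0:ℝ)..1, ψ x ^ 2 * uu f x with hQ
  set R := ∫ x in (0:ℝ)..1, φ x * ψ x * uu f x with hR
  have key : ∀ t : ℝ, 0 ≤ Q * (t * t) + (-(2 * R)) * t + P := by
    intro t
    have h0 : (0:ℝ) ≤ ∫ x in (0:ℝ)..1, (φ x - t * ψ x) ^ 2 * uu f x :=
      intervalIntegral.integral_nonneg (by norm_num)
        (fun x _ => mul_nonneg (sq_nonneg _) (hf.uu_nonneg x))
    have hexp : ∫ x in (0:ℝ)..1, (φ x - t * ψ x) ^ 2 * uu f x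
        = P + (-(2 * t)) * R + (t * t) * Q := by
      have hcongr : ∀ x ∈ Set.uIcc (0:ℝ) 1, (φ x - t * ψ x) ^ 2 * uu f x
          = (φ x ^ 2 * uu f x) + (-(2 * t)) * (φ x * ψ x * uu f x)
            + ((t * t) * (ψ x ^ 2 * uu f x)) := fun x _ => by ring
      rw [intervalIntegral.integral_congr hcongr]
      rw [intervalIntegral.integral_add (i1.add (i12.const_mul _)) (i2.const_mul _),
        intervalIntegral.integral_add i1 (i12.const_mul _),
        intervalIntegral.integral_const_mul, intervalIntegral.integral_const_mul]
    nlinarith [h0, hexp]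
  have hd := discrim_le_zero key
  rw [discrim] at hd
  nlinarith [hd]

lemma cs {φ ψ : ℝ → ℝ} (hφ : ContinuousOn φ (Set.Icc (0:ℝ) 1))
    (hψ : ContinuousOn ψ (Set.Icc (0:ℝ) 1))
    (hφ0 : ∀ x ∈ Set.Icc (0:ℝ) 1, 0 ≤ φ x) (hψ0 : ∀ x ∈ Set.Icc (0:ℝ) 1, 0 ≤ ψ x) :
    ∫ x in (0:ℝ)..1, φ x * ψ x * uu f x ≤
      Real.sqrt (∫ x in (0:ℝ)..1, φ x ^ 2 * uu f x) *
        Real.sqrt (∫ x in (0:ℝ)..1, ψ x ^ 2 * uu f x) := by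
  have hR0 : 0 ≤ ∫ x in (0:ℝ)..1, φ x * ψ x * uu f x :=
    intervalIntegral.integral_nonneg (by norm_num)
      (fun x hx => mul_nonneg (mul_nonneg (hφ0 x hx) (hψ0 x hx)) (hf.uu_nonneg x))
  have hP0 : 0 ≤ ∫ x in (0:ℝ)..1, φ x ^ 2 * uu f x :=
    intervalIntegral.integral_nonneg (by norm_num)
      (fun x _ => mul_nonneg (sq_nonneg _) (hf.uu_nonneg x))
  calc ∫ x in (0:ℝ)..1, φ x * ψ x * uu f x
      = Real.sqrt ((∫ x in (0:ℝ)..1, φ x * ψ x * uu f x) ^ 2) := by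
        rw [Real.sqrt_sq hR0]
    _ ≤ Real.sqrt ((∫ x in (0:ℝ)..1, φ x ^ 2 * uu f x) * (∫ x in (0:ℝ)..1, ψ x ^ 2 * uu f x)) :=
        Real.sqrt_le_sqrt (cs_sq hf hφ hψ)
    _ = _ := Real.sqrt_mul hP0 _

lemma ftc {h h' : ℝ → ℝ} (hD : ∀ x ∈ Set.Icc (0:ℝ) 1, HasDerivAt h (h' x) x)
    (hc : ContinuousOn h' (Set.Icc (0:ℝ) 1)) :
    ∫ x in (0:ℝ)..1, h' x = h 1 - h 0 := by
  apply intervalIntegral.integral_eq_sub_of_hasDerivAt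
  · intro x hx
    exact hD x (by rwa [Set.uIcc_of_le (by norm_num : (0:ℝ) ≤ 1)] at hx)
  · exact intInt hc

omit hf in
lemma EE_eq_inner (f : ℝ → En n) (l : ℕ) :
    EE f l = ∫ x in (0:ℝ)..1, ‖NV f l x‖ ^ 2 * uu f x := rfl

lemma agmon {Λ : ℝ} (hΛ : 0 < Λ) (hlen : Λ ≤ len f) (l : ℕ) :
    ∀ x ∈ Set.Icc (0:ℝ) 1, ‖NV f l x‖ ^ 2 ≤
      EE f l / Λ + 2 * (Real.sqrt (EE f l) * Real.sqrt (EE f (l+1))) := by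
  set G : ℝ → ℝ := fun y => ‖NV f l y‖ ^ 2 with hGdef
  set G' : ℝ → ℝ := fun y =>
    uu f y * (⟪NV f (l+1) y, NV f l y⟫ + ⟪NV f l y, NV f (l+1) y⟫) with hG'def
  have hDG : ∀ y ∈ US f, HasDerivAt G (G' y) y := by
    intro y hy
    have h := hf.hasDerivAt_inner_NV l l hy
    have : (fun t => ⟪NV f l t, NV f l t⟫) = G := by
      funext t; simp only [hGdef, real_inner_self_eq_norm_sq]
    rwa [this] at h
  have hGc : ContinuousOn G (Set.Icc (0:ℝ) 1) := ((hf.continuousOn_NV l).norm.pow 2)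
  have hG'c : ContinuousOn G' (Set.Icc (0:ℝ) 1) := by
    apply (hf.continuous_uu.continuousOn).mul
    exact ((hf.continuousOn_NV (l+1)).inner (hf.continuousOn_NV l)).add
      ((hf.continuousOn_NV l).inner (hf.continuousOn_NV (l+1)))
  obtain ⟨x₀, hx₀, hmin⟩ := isCompact_Icc.exists_isMinOn (Set.nonempty_Icc.mpr (by norm_num)) hGc
  -- min value bound
  have hminb : G x₀ ≤ EE f l / Λ := by
    rw [le_div_iff₀ hΛ]
    have hG0 : (0:ℝ) ≤ G x₀ := by simp only [hGdef]; positivity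
    have h1 : G x₀ * Λ ≤ G x₀ * len f :=
      mul_le_mul_of_nonneg_left hlen hG0
    have h2 : G x₀ * len f ≤ EE f l := by
      have : G x₀ * len f = ∫ x in (0:ℝ)..1, G x₀ * uu f x := by
        rw [intervalIntegral.integral_const_mul]; rfl
      rw [this, EE_eq_inner]
      apply intervalIntegral.integral_mono_on (by norm_num)
        (intInt ((continuousOn_const).mul hf.continuous_uu.continuousOn))
        (intInt (((hf.continuousOn_NV l).norm.pow 2).mul hf.continuous_uu.continuousOn))
      intro x hx
      exact mul_le_mul_of_nonneg_right (hmin hx) (hf.uu_nonneg x)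
    linarith
  -- total variation bound
  have habs : ∫ y in (0:ℝ)..1, |G' y| ≤
      2 * (Real.sqrt (EE f l) * Real.sqrt (EE f (l+1))) := by
    have hpt : ∀ y ∈ Set.Icc (0:ℝ) 1,
        |G' y| ≤ 2 * ((‖NV f l y‖ * ‖NV f (l+1) y‖) * uu f y) := by
      intro y hy
      have h1 : |⟪NV f (l+1) y, NV f l y⟫ + ⟪NV f l y, NV f (l+1) y⟫|
          ≤ 2 * (‖NV f l y‖ * ‖NV f (l+1) y‖) := by
        have a1 := abs_real_inner_le_norm (NV f (l+1) y) (NV f l y)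
        have a2 := abs_real_inner_le_norm (NV f l y) (NV f (l+1) y)
        calc |⟪NV f (l+1) y, NV f l y⟫ + ⟪NV f l y, NV f (l+1) y⟫|
            ≤ |⟪NV f (l+1) y, NV f l y⟫| + |⟪NV f l y, NV f (l+1) y⟫| := abs_add_le _ _
          _ ≤ 2 * (‖NV f l y‖ * ‖NV f (l+1) y‖) := by nlinarith
      have : |G' y| = uu f y * |⟪NV f (l+1) y, NV f l y⟫ + ⟪NV f l y, NV f (l+1) y⟫| := by
        rw [hG'def, abs_mul, abs_of_nonneg (hf.uu_nonneg y)]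
      rw [this]
      calc uu f y * |⟪NV f (l+1) y, NV f l y⟫ + ⟪NV f l y, NV f (l+1) y⟫|
          ≤ uu f y * (2 * (‖NV f l y‖ * ‖NV f (l+1) y‖)) :=
            mul_le_mul_of_nonneg_left h1 (hf.uu_nonneg y)
        _ = 2 * ((‖NV f l y‖ * ‖NV f (l+1) y‖) * uu f y) := by ring
    calc ∫ y in (0:ℝ)..1, |G' y|
        ≤ ∫ y in (0:ℝ)..1, 2 * ((‖NV f l y‖ * ‖NV f (l+1) y‖) * uu f y) := by
          apply intervalIntegral.integral_mono_on (by norm_num)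
            (intInt hG'c.abs)
            (intInt ((continuousOn_const).mul
              (((hf.continuousOn_NV l).norm.mul (hf.continuousOn_NV (l+1)).norm).mul
                hf.continuous_uu.continuousOn)))
          exact hpt
      _ = 2 * ∫ y in (0:ℝ)..1, (‖NV f l y‖ * ‖NV f (l+1) y‖) * uu f y := by
          rw [intervalIntegral.integral_const_mul]
      _ ≤ 2 * (Real.sqrt (EE f l) * Real.sqrt (EE f (l+1))) := by
          have := cs hf (φ := fun y => ‖NV f l y‖) (ψ := fun y => ‖NV f (l+1) y‖)
            (hf.continuousOn_NV l).norm (hf.continuousOn_NV (l+1)).norm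
            (fun x _ => norm_nonneg _) (fun x _ => norm_nonneg _)
          rw [EE_eq_inner, EE_eq_inner]
          linarith
  -- pointwise bound via FTC
  intro x hx
  have hvar : G x ≤ G x₀ + ∫ y in (0:ℝ)..1, |G' y| := by
    have hsub : ∀ a b : ℝ, a ∈ Set.Icc (0:ℝ) 1 → b ∈ Set.Icc (0:ℝ) 1 → a ≤ b →
        |G b - G a| ≤ ∫ y in (0:ℝ)..1, |G' y| := by
      intro a b ha hb hab
      have hIccsub : Set.Icc a b ⊆ Set.Icc (0:ℝ) 1 :=
        Set.Icc_subset_Icc ha.1 hb.2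
      have husub : Set.uIcc a b ⊆ Set.Icc (0:ℝ) 1 := by
        rw [Set.uIcc_of_le hab]; exact hIccsub
      have hftc : ∫ y in a..b, G' y = G b - G a := by
        apply intervalIntegral.integral_eq_sub_of_hasDerivAt
        · intro y hy
          exact hDG y (hf.icc_subset (husub hy))
        · exact (hG'c.mono husub).intervalIntegrable
      rw [← hftc]
      calc |∫ y in a..b, G' y| ≤ ∫ y in a..b, |G' y| :=
            intervalIntegral.abs_integral_le_integral_abs hab
        _ ≤ ∫ y in (0:ℝ)..1, |G' y| := by
            apply intervalIntegral.integral_mono_interval ha.1 hab hb.2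
            · filter_upwards with y using abs_nonneg _
            · exact intInt hG'c.abs
    rcases le_total x₀ x with hle | hle
    · have h1 := hsub x₀ x hx₀ hx hle
      have := le_abs_self (G x - G x₀); linarith
    · have h1 := hsub x x₀ hx hx₀ hle
      have h2 := le_abs_self (G x₀ - G x)
      rw [abs_sub_comm] at h1
      have h3 := le_abs_self (G x - G x₀)
      linarith
  have := hminb
  show ‖NV f l x‖ ^ 2 ≤ _
  calc ‖NV f l x‖ ^ 2 = G x := rfl
    _ ≤ G x₀ + ∫ y in (0:ℝ)..1, |G' y| := hvar
    _ ≤ EE f l / Λ + 2 * (Real.sqrt (EE f l) * Real.sqrt (EE f (l+1))) := by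
        linarith [habs, hminb]

end Integrals

def JJ (f : ℝ → En n) (Λ : ℝ) (j : ℕ) : ℝ :=
  Real.sqrt (EE f j / Λ + 2 * (Real.sqrt (EE f j) * Real.sqrt (EE f (j+1))))

lemma sup_le_JJ {f : ℝ → En n} (hf : Reg f) {Λ : ℝ} (hΛ : 0 < Λ) (hlen : Λ ≤ len f) (j : ℕ) :
    ∀ x ∈ Set.Icc (0:ℝ) 1, ‖NV f j x‖ ≤ JJ f Λ j := by
  intro x hx
  have h := agmon hf hΛ hlen j x hx
  have := Real.sqrt_le_sqrt h
  rwa [Real.sqrt_sq (norm_nonneg _)] at this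

lemma JJ_nonneg (f : ℝ → En n) (Λ : ℝ) (j : ℕ) : 0 ≤ JJ f Λ j := Real.sqrt_nonneg _

lemma ibp_s19 {f : ℝ → En n} (hf : Reg f) {Λ : ℝ} (hΛ : 0 < Λ) (hlen : Λ ≤ len f) (l : ℕ) :
    EE f (l+1) ≤ Real.sqrt (EE f l) * Real.sqrt (EE f (l+2)) +
      2 * (JJ f Λ l * JJ f Λ (l+1)) := by
  set h : ℝ → ℝ := fun y => ⟪NV f l y, NV f (l+1) y⟫ with hhdef
  set h' : ℝ → ℝ := fun y =>
    uu f y * (⟪NV f (l+1) y, NV f (l+1) y⟫ + ⟪NV f l y, NV f (l+2) y⟫) with hh'def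
  have hD : ∀ x ∈ Set.Icc (0:ℝ) 1, HasDerivAt h (h' x) x := fun x hx =>
    hf.hasDerivAt_inner_NV l (l+1) (hf.icc_subset hx)
  have hc : ContinuousOn h' (Set.Icc (0:ℝ) 1) := by
    apply (hf.continuous_uu.continuousOn).mul
    exact ((hf.continuousOn_NV (l+1)).inner (hf.continuousOn_NV (l+1))).add
      ((hf.continuousOn_NV l).inner (hf.continuousOn_NV (l+2)))
  have hftc : ∫ x in (0:ℝ)..1, h' x = h 1 - h 0 := ftc hf hD hc
  have i1 : IntervalIntegrable (fun x => ‖NV f (l+1) x‖ ^ 2 * uu f x) volume 0 1 :=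
    intInt (((hf.continuousOn_NV (l+1)).norm.pow 2).mul hf.continuous_uu.continuousOn)
  have i2 : IntervalIntegrable (fun x => ⟪NV f l x, NV f (l+2) x⟫ * uu f x) volume 0 1 :=
    intInt (((hf.continuousOn_NV l).inner (hf.continuousOn_NV (l+2))).mul
      hf.continuous_uu.continuousOn)
  have hsplit : ∫ x in (0:ℝ)..1, h' x
      = EE f (l+1) + ∫ x in (0:ℝ)..1, ⟪NV f l x, NV f (l+2) x⟫ * uu f x := by
    have hcongr : ∀ x ∈ Set.uIcc (0:ℝ) 1, h' x
        = ‖NV f (l+1) x‖ ^ 2 * uu f x + ⟪NV f l x, NV f (l+2) x⟫ * uu f x := by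
      intro x _
      simp only [hh'def, real_inner_self_eq_norm_sq]
      ring
    rw [intervalIntegral.integral_congr hcongr, intervalIntegral.integral_add i1 i2,
      EE_eq_inner]
  -- bound the inner-product integral from below
  have hcross : -(Real.sqrt (EE f l) * Real.sqrt (EE f (l+2)))
      ≤ ∫ x in (0:ℝ)..1, ⟪NV f l x, NV f (l+2) x⟫ * uu f x := by
    have hpt : ∀ x ∈ Set.Icc (0:ℝ) 1,
        -(‖NV f l x‖ * ‖NV f (l+2) x‖ * uu f x) ≤ ⟪NV f l x, NV f (l+2) x⟫ * uu f x := by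
      intro x _
      have h1 := abs_real_inner_le_norm (NV f l x) (NV f (l+2) x)
      have h2 := neg_abs_le (⟪NV f l x, NV f (l+2) x⟫ : ℝ)
      have hu := hf.uu_nonneg x
      nlinarith
    have hm := intervalIntegral.integral_mono_on (by norm_num : (0:ℝ) ≤ 1)
      (intInt (ContinuousOn.neg (((hf.continuousOn_NV l).norm.mul
        (hf.continuousOn_NV (l+2)).norm).mul hf.continuous_uu.continuousOn))) i2 hpt
    have hcs := cs hf (φ := fun y => ‖NV f l y‖) (ψ := fun y => ‖NV f (l+2) y‖)
      (hf.continuousOn_NV l).norm (hf.continuousOn_NV (l+2)).norm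
      (fun x _ => norm_nonneg _) (fun x _ => norm_nonneg _)
    simp only [Pi.neg_apply, Pi.mul_apply, intervalIntegral.integral_neg] at hm
    rw [EE_eq_inner, EE_eq_inner]
    linarith
  -- bound boundary values
  have hbd : ∀ e ∈ Set.Icc (0:ℝ) 1, |h e| ≤ JJ f Λ l * JJ f Λ (l+1) := by
    intro e he
    have h1 := abs_real_inner_le_norm (NV f l e) (NV f (l+1) e)
    have h2 := sup_le_JJ hf hΛ hlen l e he
    have h3 := sup_le_JJ hf hΛ hlen (l+1) e he
    calc |h e| ≤ ‖NV f l e‖ * ‖NV f (l+1) e‖ := h1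
      _ ≤ JJ f Λ l * JJ f Λ (l+1) :=
          mul_le_mul h2 h3 (norm_nonneg _) (JJ_nonneg _ _ _)
  have hb1 := abs_le.mp (hbd 1 (by norm_num))
  have hb0 := abs_le.mp (hbd 0 (by norm_num))
  rw [hsplit] at hftc
  linarith [hb1.1, hb1.2, hb0.1, hb0.2, hcross, hftc]

-- ==================== discrete interpolation lemma ====================

def epsf (K : ℝ) : ℕ → ℝ
  | 0 => 1
  | (d+1) => (epsf K d) ^ 4 / (4 * K ^ 2)

lemma epsf_pos {K : ℝ} (hK : 1 ≤ K) : ∀ d, 0 < epsf K d := by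
  intro d
  induction d with
  | zero => norm_num [epsf]
  | succ k ih =>
    have hK0 : (0:ℝ) < K := lt_of_lt_of_le one_pos hK
    simp only [epsf]
    positivity

lemma epsf_le_one {K : ℝ} (hK : 1 ≤ K) : ∀ d, epsf K d ≤ 1 := by
  intro d
  induction d with
  | zero => norm_num [epsf]
  | succ k ih =>
    have h1 := epsf_pos hK k
    have h4 : epsf K k ^ 4 ≤ 1 := pow_le_one₀ h1.le ih
    simp only [epsf]
    rw [div_le_one (by positivity)]
    nlinarith [h4, sq_nonneg (K-1), hK]

lemma epsf_anti {K : ℝ} (hK : 1 ≤ K) : ∀ d, epsf K (d+1) ≤ epsf K d := by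
  intro d
  have h1 := epsf_pos hK d
  have h2 := epsf_le_one hK d
  have h3 : epsf K d ^ 3 ≤ 1 := pow_le_one₀ h1.le h2
  have h4 : (1:ℝ) ≤ 4 * K ^ 2 := by nlinarith [sq_nonneg (K-1)]
  simp only [epsf]
  rw [div_le_iff₀ (by positivity)]
  calc epsf K d ^ 4 = epsf K d * epsf K d ^ 3 := by ring
    _ ≤ epsf K d * (4 * K ^ 2) := by
        exact mul_le_mul_of_nonneg_left (h3.trans h4) h1.le

lemma epsf_mono {K : ℝ} (hK : 1 ≤ K) : ∀ {d e}, d ≤ e → epsf K e ≤ epsf K d := by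
  intro d e h
  induction e with
  | zero => simp_all
  | succ k ih =>
    rcases Nat.lt_or_ge d (k+1) with hlt | hge
    · exact (epsf_anti hK k).trans (ih (Nat.lt_succ_iff.mp hlt))
    · have : d = k + 1 := le_antisymm h hge
      subst this; exact le_refl _

lemma walk_step (K M : ℝ) (hK : 1 ≤ K) (hM : 0 < M) (a : ℕ → ℝ) (ha : ∀ j, 0 ≤ a j)
    (j : ℕ)
    (hstepj : a j ^ 2 ≤ K * (a (j-1) * M + Real.sqrt (a (j-1) * M) * M))
    (ε : ℝ) (hε0 : 0 < ε) (hε1 : ε ≤ 1) (hεa : ε * M ≤ a j) :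
    (ε ^ 4 / (4 * K ^ 2)) * M ≤ a (j-1) := by
  by_contra hcon
  push_neg at hcon
  set B : ℝ := a (j-1) with hB
  set δ : ℝ := ε ^ 4 / (4 * K ^ 2) with hδ
  have hK0 : (0:ℝ) < K := lt_of_lt_of_le one_pos hK
  have hB0 : 0 ≤ B := ha _
  set s : ℝ := Real.sqrt δ with hsdef
  have hs : s = ε ^ 2 / (2 * K) := by
    rw [hsdef, show δ = (ε ^ 2 / (2 * K)) ^ 2 by rw [hδ]; ring]
    exact Real.sqrt_sq (by positivity)
  have h1 : ε ^ 2 * M ^ 2 ≤ a j ^ 2 := by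
    have h := pow_le_pow_left₀ (mul_nonneg hε0.le hM.le) hεa 2
    nlinarith [h]
  have h2 : Real.sqrt (B * M) ≤ s * M := by
    have hle : B * M ≤ (δ * M) * M := by nlinarith [hcon.le, hM.le]
    calc Real.sqrt (B * M) ≤ Real.sqrt ((δ * M) * M) := Real.sqrt_le_sqrt hle
      _ = s * M := by
          rw [mul_assoc, Real.sqrt_mul (by rw [hδ]; positivity), Real.sqrt_mul_self hM.le,
            hsdef]
  have h2' : Real.sqrt (B * M) * M ≤ s * M * M :=
    mul_le_mul_of_nonneg_right h2 hM.le
  have hq := mul_le_mul_of_nonneg_left h2' hK0.le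
  have hexp : K * (B * M + Real.sqrt (B * M) * M)
      = K * B * M + K * (Real.sqrt (B * M) * M) := by ring
  have hstep' : a j ^ 2 ≤ K * B * M + K * (s * M * M) := by
    rw [hexp] at hstepj; linarith [hstepj, hq]
  have hKne : K ≠ 0 := hK0.ne'
  have hKs : K * s = ε ^ 2 / 2 := by rw [hs]; field_simp
  have e1 : K * (s * M * M) = (ε ^ 2 / 2) * M ^ 2 := by
    rw [show K * (s * M * M) = (K * s) * (M * M) from by ring, hKs]; ring
  have hKBM : K * B * M ≤ K * δ * M ^ 2 := by
    have h := mul_le_mul_of_nonneg_left hcon.le (mul_nonneg hK0.le hM.le)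
    nlinarith [h]
  have hε2 : ε ^ 2 ≤ 1 := by nlinarith
  have hε4 : ε ^ 4 ≤ ε ^ 2 := by nlinarith [hε2, sq_nonneg ε]
  have hKδ4 : 4 * K * (K * δ) = ε ^ 4 := by
    rw [hδ]; field_simp
  have hε2K : ε ^ 2 ≤ K * ε ^ 2 := by nlinarith [sq_nonneg ε]
  have h4K : (0:ℝ) < 4 * K := by linarith
  have key : 4 * K * (K * δ) ≤ 4 * K * (ε ^ 2 / 4) := by
    rw [hKδ4]
    have : 4 * K * (ε ^ 2 / 4) = K * ε ^ 2 := by ring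
    rw [this]; linarith [hε4, hε2K]
  have hKδ : K * δ ≤ ε ^ 2 / 4 := (mul_le_mul_iff_right₀ h4K).mp key
  have hKδM : K * δ * M ^ 2 ≤ (ε ^ 2 / 4) * M ^ 2 :=
    mul_le_mul_of_nonneg_right hKδ (sq_nonneg M)
  have hpos : 0 < ε ^ 2 * M ^ 2 := by positivity
  linarith [h1, hstep', hKBM, hKδM, e1, hpos]

lemma discrete_interp (m : ℕ) (K : ℝ) (hK : 1 ≤ K) (a : ℕ → ℝ)
    (ha : ∀ j, 0 ≤ a j) (M : ℝ) (hMb : ∀ j, j ≤ m → a j ≤ M)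
    (hMmem : ∃ j, j ≤ m ∧ M = a j)
    (hstep : ∀ l, 1 ≤ l → l + 1 ≤ m →
      a l ^ 2 ≤ K * (a (l-1) * M + Real.sqrt (a (l-1) * M) * M)) :
    M ≤ (epsf K m)⁻¹ * (a 0 + a m) := by
  have hepos := epsf_pos hK m
  have heone := epsf_le_one hK m
  have hinv1 : 1 ≤ (epsf K m)⁻¹ := by
    have hmul := mul_inv_cancel₀ hepos.ne'
    nlinarith [inv_nonneg.mpr hepos.le, hmul, heone, hepos]
  obtain ⟨j₀, hj₀m, hMa⟩ := hMmem
  rcases le_or_gt M 0 with hM0 | hM0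
  · calc M ≤ 0 := hM0
      _ ≤ (epsf K m)⁻¹ * (a 0 + a m) :=
          mul_nonneg (inv_nonneg.mpr hepos.le) (by linarith [ha 0, ha m])
  rcases Nat.eq_zero_or_pos j₀ with h0 | hj₀pos
  · subst h0
    calc M = a 0 := hMa
      _ ≤ 1 * (a 0 + a m) := by linarith [ha m, ha 0]
      _ ≤ (epsf K m)⁻¹ * (a 0 + a m) := by
          apply mul_le_mul_of_nonneg_right hinv1; linarith [ha 0, ha m]
  rcases eq_or_lt_of_le hj₀m with heq | hj₀lt
  · subst heq
    calc M = a j₀ := hMa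
      _ ≤ 1 * (a 0 + a j₀) := by linarith [ha 0, ha j₀]
      _ ≤ (epsf K j₀)⁻¹ * (a 0 + a j₀) := by
          apply mul_le_mul_of_nonneg_right hinv1; linarith [ha 0, ha j₀]
  -- interior case
  have hwalk : ∀ d, d ≤ j₀ → epsf K d * M ≤ a (j₀ - d) := by
    intro d
    induction d with
    | zero =>
      intro _
      simp only [epsf, Nat.sub_zero, one_mul]
      exact le_of_eq hMa
    | succ k ih =>
      intro hk
      have hkj : k ≤ j₀ := Nat.le_of_succ_le hk
      have IH := ih hkj
      set j : ℕ := j₀ - k with hj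
      have hj1 : 1 ≤ j := by omega
      have hjm : j + 1 ≤ m := by omega
      have hstepj := hstep j hj1 hjm
      have hconc := walk_step K M hK hM0 a ha j hstepj (epsf K k)
        (epsf_pos hK k) (epsf_le_one hK k) IH
      have hidx : j - 1 = j₀ - (k+1) := by omega
      rw [hidx] at hconc
      simpa only [epsf] using hconc
  have hfin := hwalk j₀ (le_refl _)
  simp only [Nat.sub_self] at hfin
  have h1 : epsf K m * M ≤ a 0 := by
    calc epsf K m * M ≤ epsf K j₀ * M :=
          mul_le_mul_of_nonneg_right (epsf_mono hK hj₀m) hM0.le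
      _ ≤ a 0 := hfin
  calc M = (epsf K m)⁻¹ * (epsf K m * M) := by field_simp
    _ ≤ (epsf K m)⁻¹ * (a 0 + a m) := by
        apply mul_le_mul_of_nonneg_left _ (by positivity)
        linarith [ha m]



-- ==================== uniform bound on all intermediate energies ====================

def Kc (Λ : ℝ) : ℝ := 1 + 2 * (1/Λ + 2)

lemma Kc_ge_one {Λ : ℝ} (hΛ : 0 < Λ) : 1 ≤ Kc Λ := by
  have : 0 < 1/Λ := by positivity
  simp only [Kc]; linarith

lemma EE_all {f : ℝ → En n} (hf : Reg f) {Λ C₀ : ℝ} (hΛ : 0 < Λ) (hlen : Λ ≤ len f)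
    (m : ℕ) (h0 : Real.sqrt (EE f 0) ≤ C₀) (hm : Real.sqrt (EE f m) ≤ C₀) :
    ∀ j ≤ m, Real.sqrt (EE f j) ≤ (epsf (Kc Λ) m)⁻¹ * (2 * C₀) := by
  set a : ℕ → ℝ := fun j => Real.sqrt (EE f j) with hadef
  have ha : ∀ j, 0 ≤ a j := fun j => Real.sqrt_nonneg _
  have hsq : ∀ j, a j ^ 2 = EE f j := fun j => Real.sq_sqrt (EE_nonneg f j)
  obtain ⟨j₀, hj₀mem, hmax⟩ := Finset.exists_max_image (Finset.range (m+1)) a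
    ⟨0, Finset.mem_range.mpr (Nat.succ_pos m)⟩
  set M : ℝ := a j₀ with hMdef
  have hM0 : 0 ≤ M := ha j₀
  have hMb : ∀ j, j ≤ m → a j ≤ M := fun j hj =>
    hmax j (Finset.mem_range.mpr (Nat.lt_succ_of_le hj))
  have hK := Kc_ge_one hΛ
  have hc0 : (0:ℝ) ≤ 1/Λ + 2 := by positivity
  set c : ℝ := 1/Λ + 2 with hcdef
  have hstep : ∀ l, 1 ≤ l → l + 1 ≤ m →
      a l ^ 2 ≤ Kc Λ * (a (l-1) * M + Real.sqrt (a (l-1) * M) * M) := by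
    intro l hl1 hlm
    obtain ⟨k, rfl⟩ : ∃ k, l = k + 1 := ⟨l - 1, by omega⟩
    have hk1 : k + 1 ≤ m := by omega
    have hk2 : k + 2 ≤ m := by omega
    have hibp := ibp_s19 hf hΛ hlen k
    have hakM : a k ≤ M := hMb k (by omega)
    have hak1M : a (k+1) ≤ M := hMb (k+1) hk1
    have hak2M : a (k+2) ≤ M := hMb (k+2) hk2
    have hJk : JJ f Λ k ≤ Real.sqrt (c * (a k * M)) := by
      apply Real.sqrt_le_sqrt
      have hak : Real.sqrt (EE f k) = a k := rfl
      have hak1 : Real.sqrt (EE f (k+1)) = a (k+1) := rfl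
      have hEk : EE f k = a k ^ 2 := (hsq k).symm
      rw [hak, hak1, hEk]
      have h3 : a k ^ 2 * (1/Λ) ≤ (a k * M) * (1/Λ) := by
        apply mul_le_mul_of_nonneg_right _ (by positivity)
        nlinarith [ha k]
      have h4 : a k * a (k+1) ≤ a k * M :=
        mul_le_mul_of_nonneg_left hak1M (ha k)
      calc a k ^ 2 / Λ + 2 * (a k * a (k+1))
          = a k ^ 2 * (1/Λ) + 2 * (a k * a (k+1)) := by ring
        _ ≤ (a k * M) * (1/Λ) + 2 * (a k * M) := by linarith
        _ = c * (a k * M) := by rw [hcdef]; ring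
    have hJk1 : JJ f Λ (k+1) ≤ Real.sqrt (c * M ^ 2) := by
      apply Real.sqrt_le_sqrt
      have hak1 : Real.sqrt (EE f (k+1)) = a (k+1) := rfl
      have hak2 : Real.sqrt (EE f (k+2)) = a (k+2) := rfl
      have hEk1 : EE f (k+1) = a (k+1) ^ 2 := (hsq (k+1)).symm
      rw [hak1, hak2, hEk1]
      have h3 : a (k+1) ^ 2 * (1/Λ) ≤ M ^ 2 * (1/Λ) := by
        apply mul_le_mul_of_nonneg_right _ (by positivity)
        nlinarith [ha (k+1)]
      have h4 : a (k+1) * a (k+2) ≤ M * M :=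
        mul_le_mul hak1M hak2M (ha (k+2)) hM0
      calc a (k+1) ^ 2 / Λ + 2 * (a (k+1) * a (k+2))
          = a (k+1) ^ 2 * (1/Λ) + 2 * (a (k+1) * a (k+2)) := by ring
        _ ≤ M ^ 2 * (1/Λ) + 2 * (M * M) := by linarith
        _ = c * M ^ 2 := by rw [hcdef]; ring
    have hprod : JJ f Λ k * JJ f Λ (k+1) ≤ c * (Real.sqrt (a k * M) * M) := by
      have h5 : JJ f Λ k * JJ f Λ (k+1) ≤
          Real.sqrt (c * (a k * M)) * Real.sqrt (c * M ^ 2) :=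
        mul_le_mul hJk hJk1 (JJ_nonneg _ _ _) (Real.sqrt_nonneg _)
      have h6 : Real.sqrt (c * (a k * M)) = Real.sqrt c * Real.sqrt (a k * M) :=
        Real.sqrt_mul hc0 _
      have h7 : Real.sqrt (c * M ^ 2) = Real.sqrt c * M := by
        rw [Real.sqrt_mul hc0, Real.sqrt_sq hM0]
      have h8 : Real.sqrt c * Real.sqrt (a k * M) * (Real.sqrt c * M)
          = c * (Real.sqrt (a k * M) * M) := by
        rw [show Real.sqrt c * Real.sqrt (a k * M) * (Real.sqrt c * M)
          = (Real.sqrt c * Real.sqrt c) * (Real.sqrt (a k * M) * M) from by ring,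
          Real.mul_self_sqrt hc0]
      rw [h6, h7] at h5
      rw [h8] at h5
      exact h5
    have hcross : Real.sqrt (EE f k) * Real.sqrt (EE f (k+2)) ≤ a k * M :=
      mul_le_mul_of_nonneg_left hak2M (ha k)
    have hKge : 2 * c ≤ Kc Λ := by simp only [Kc, hcdef]; linarith
    have hidx : k + 1 - 1 = k := by omega
    rw [hidx, hsq (k+1)]
    have hs0 : 0 ≤ Real.sqrt (a k * M) * M := mul_nonneg (Real.sqrt_nonneg _) hM0
    have hak0 : 0 ≤ a k * M := mul_nonneg (ha k) hM0
    calc EE f (k+1) ≤ Real.sqrt (EE f k) * Real.sqrt (EE f (k+2))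
          + 2 * (JJ f Λ k * JJ f Λ (k+1)) := hibp
      _ ≤ a k * M + 2 * (c * (Real.sqrt (a k * M) * M)) := by linarith
      _ ≤ Kc Λ * (a k * M) + Kc Λ * (Real.sqrt (a k * M) * M) := by
          have e1 : a k * M ≤ Kc Λ * (a k * M) := by nlinarith [hak0, hK]
          have e2 : 2 * (c * (Real.sqrt (a k * M) * M))
              ≤ Kc Λ * (Real.sqrt (a k * M) * M) := by nlinarith [hs0, hKge]
          linarith
      _ = Kc Λ * (a k * M + Real.sqrt (a k * M) * M) := by ring
  have hdisc := discrete_interp m (Kc Λ) hK a ha M hMb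
    ⟨j₀, Nat.lt_succ_iff.mp (Finset.mem_range.mp hj₀mem), rfl⟩ hstep
  intro j hj
  have hepos := epsf_pos hK m
  calc a j ≤ M := hMb j hj
    _ ≤ (epsf (Kc Λ) m)⁻¹ * (a 0 + a m) := hdisc
    _ ≤ (epsf (Kc Λ) m)⁻¹ * (2 * C₀) := by
        apply mul_le_mul_of_nonneg_left _ (inv_nonneg.mpr hepos.le)
        linarith [h0, hm]


-- ==================== coefficient calculus ====================

inductive PolW (f : ℝ → En n) (T : ℝ) : ℕ → ℕ → ℝ → (ℝ → ℝ) → Prop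
  | zero (l d : ℕ) : PolW f T l d 0 (fun _ => 0)
  | base (l d : ℕ) (i j : ℕ) (hi : i ≤ l) (hj : j ≤ l) :
      PolW f T l d (T^2) (fun x => ⟪NV f i x, NV f j x⟫)
  | add {l d w₁ w₂ ρ₁ ρ₂} : PolW f T l d w₁ ρ₁ → PolW f T l d w₂ ρ₂ →
      PolW f T l d (w₁ + w₂) (fun x => ρ₁ x + ρ₂ x)
  | neg {l d w ρ} : PolW f T l d w ρ → PolW f T l d w (fun x => -(ρ x))
  | mulbase {l d w ρ} (i j : ℕ) (hi : i ≤ l) (hj : j ≤ l) : PolW f T l d w ρ →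
      PolW f T l (d+1) (T^2 * w) (fun x => ⟪NV f i x, NV f j x⟫ * ρ x)

namespace PolW

variable {f : ℝ → En n} {T : ℝ}

lemma mono {l d w ρ} (h : PolW f T l d w ρ) :
    ∀ {l' d'}, l ≤ l' → d ≤ d' → PolW f T l' d' w ρ := by
  induction h with
  | zero d => intro l' d' _ _; exact PolW.zero l' d'
  | base d i j hi hj => intro l' d' hl _; exact PolW.base _ _ i j (hi.trans hl) (hj.trans hl)
  | add h₁ h₂ ih₁ ih₂ => intro l' d' hl hd; exact PolW.add (ih₁ hl hd) (ih₂ hl hd)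
  | neg h ih => intro l' d' hl hd; exact PolW.neg (ih hl hd)
  | mulbase i j hi hj h ih =>
    intro l' d' hl hd
    obtain ⟨e, rfl⟩ : ∃ e, d' = e + 1 := ⟨d' - 1, by omega⟩
    exact PolW.mulbase i j (hi.trans hl) (hj.trans hl) (ih hl (by omega))

lemma w_nonneg (hT : 0 ≤ T) {l d w ρ} (h : PolW f T l d w ρ) : 0 ≤ w := by
  induction h with
  | zero d => exact le_refl 0
  | base d i j hi hj => positivity
  | add h₁ h₂ ih₁ ih₂ => linarith
  | neg h ih => exact ih
  | mulbase i j hi hj h ih => positivity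

lemma sum {l d : ℕ} (s : Finset ℕ) (w : ℕ → ℝ) (ρ : ℕ → ℝ → ℝ)
    (h : ∀ j ∈ s, PolW f T l d (w j) (ρ j)) :
    PolW f T l d (∑ j ∈ s, w j) (fun x => ∑ j ∈ s, ρ j x) := by
  classical
  induction s using Finset.induction_on with
  | empty => simpa using PolW.zero l d
  | insert _ _ hnotmem ih =>
    rename_i a s'
    rw [Finset.sum_insert hnotmem]
    have heq : (fun x => ∑ j ∈ insert a s', ρ j x)
        = fun x => ρ a x + ∑ j ∈ s', ρ j x := by
      funext x; rw [Finset.sum_insert hnotmem]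
    rw [heq]
    exact PolW.add (h a (Finset.mem_insert_self a s'))
      (ih (fun j hj => h j (Finset.mem_insert_of_mem hj)))

lemma hasDeriv (hf : Reg f) (hT : 0 ≤ T) {l d w ρ} (h : PolW f T l d w ρ) :
    ∃ (w' : ℝ) (ρ' : ℝ → ℝ), PolW f T (l+1) d w' ρ' ∧ w' ≤ 2*(d+1)*w ∧
      ∀ x ∈ US f, HasDerivAt ρ (uu f x * ρ' x) x := by
  induction h with
  | zero d =>
    refine ⟨0, fun _ => 0, PolW.zero _ _, by norm_num, ?_⟩
    intro x hx
    rw [show uu f x * (0:ℝ) = 0 from by ring]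
    exact hasDerivAt_const x 0
  | base d i j hi hj =>
    refine ⟨T^2 + T^2,
      fun x => ⟪NV f (i+1) x, NV f j x⟫ + ⟪NV f i x, NV f (j+1) x⟫,
      PolW.add (PolW.base _ _ (i+1) j (by omega) (by omega))
        (PolW.base _ _ i (j+1) (by omega) (by omega)), ?_, ?_⟩
    · have hT2 : (0:ℝ) ≤ T^2 := sq_nonneg T
      have hd1 : (1:ℝ) ≤ (d:ℝ) + 1 := by
        have := Nat.cast_nonneg (α := ℝ) d; linarith
      nlinarith
    · intro x hx
      exact hf.hasDerivAt_inner_NV i j hx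
  | add h₁ h₂ ih₁ ih₂ =>
    obtain ⟨w₁', ρ₁', hp₁, hb₁, hd₁⟩ := ih₁
    obtain ⟨w₂', ρ₂', hp₂, hb₂, hd₂⟩ := ih₂
    refine ⟨w₁' + w₂', fun x => ρ₁' x + ρ₂' x, PolW.add hp₁ hp₂, by linarith, ?_⟩
    intro x hx
    have hD := (hd₁ x hx).add (hd₂ x hx)
    rwa [show uu f x * ρ₁' x + uu f x * ρ₂' x = uu f x * (ρ₁' x + ρ₂' x) from by ring] at hD
  | neg h ih =>
    obtain ⟨w', ρ', hp, hb, hd⟩ := ih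
    refine ⟨w', fun x => -(ρ' x), PolW.neg hp, hb, ?_⟩
    intro x hx
    have hD := (hd x hx).neg
    rwa [show -(uu f x * ρ' x) = uu f x * (-(ρ' x)) from by ring] at hD
  | mulbase i j hi hj h ih =>
    rename_i d w ρ
    obtain ⟨w', ρ', hp, hb, hd⟩ := ih
    have hw := h.w_nonneg hT
    have hw' := hp.w_nonneg hT
    refine ⟨(T^2 * w + T^2 * w) + T^2 * w',
      fun x => (⟪NV f (i+1) x, NV f j x⟫ * ρ x + ⟪NV f i x, NV f (j+1) x⟫ * ρ x)
        + ⟪NV f i x, NV f j x⟫ * ρ' x,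
      PolW.add
        (PolW.add (PolW.mulbase (i+1) j (by omega) (by omega) (h.mono (by omega) (le_refl d)))
          (PolW.mulbase i (j+1) (by omega) (by omega) (h.mono (by omega) (le_refl d))))
        (PolW.mulbase i j (by omega) (by omega) hp), ?_, ?_⟩
    · have hT2 : (0:ℝ) ≤ T^2 := sq_nonneg T
      push_cast
      nlinarith [mul_nonneg hT2 (sub_nonneg.mpr hb)]
    · intro x hx
      have hq := hf.hasDerivAt_inner_NV i j hx
      have hD := hq.mul (hd x hx)
      rw [show uu f x * (⟪NV f (i+1) x, NV f j x⟫ + ⟪NV f i x, NV f (j+1) x⟫) * ρ x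
          + ⟪NV f i x, NV f j x⟫ * (uu f x * ρ' x)
          = uu f x * ((⟪NV f (i+1) x, NV f j x⟫ * ρ x + ⟪NV f i x, NV f (j+1) x⟫ * ρ x)
            + ⟪NV f i x, NV f j x⟫ * ρ' x) from by ring] at hD
      exact hD

lemma bound (hf : Reg f) (hT : 1 ≤ T) {lev d w ρ}
    (hsup : ∀ j, j ≤ lev → ∀ x ∈ Set.Icc (0:ℝ) 1, ‖NV f j x‖ ≤ T)
    (h : PolW f T lev d w ρ) :
    ∀ x ∈ Set.Icc (0:ℝ) 1, |ρ x| ≤ w ∧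
      T * |ρ x| ≤ w * (∑ j ∈ Finset.range (lev+1), ‖NV f j x‖) := by
  have hT0 : (0:ℝ) ≤ T := by linarith
  induction h with
  | zero d =>
    intro x hx
    constructor
    · simp
    · simp
  | base d i j hi hj =>
    intro x hx
    have h1 := abs_real_inner_le_norm (NV f i x) (NV f j x)
    have h2 := hsup i hi x hx
    have h3 := hsup j hj x hx
    have hsumge : ‖NV f j x‖ ≤ ∑ k ∈ Finset.range (lev+1), ‖NV f k x‖ :=
      Finset.single_le_sum (f := fun k => ‖NV f k x‖) (fun k _ => norm_nonneg _)
        (Finset.mem_range.mpr (by omega))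
    constructor
    · calc |⟪NV f i x, NV f j x⟫| ≤ ‖NV f i x‖ * ‖NV f j x‖ := h1
        _ ≤ T * T := mul_le_mul h2 h3 (norm_nonneg _) hT0
        _ = T^2 := by ring
    · calc T * |⟪NV f i x, NV f j x⟫| ≤ T * (‖NV f i x‖ * ‖NV f j x‖) :=
          mul_le_mul_of_nonneg_left h1 hT0
        _ ≤ T * (T * ‖NV f j x‖) := by
            apply mul_le_mul_of_nonneg_left _ hT0
            exact mul_le_mul_of_nonneg_right h2 (norm_nonneg _)
        _ = T^2 * ‖NV f j x‖ := by ring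
        _ ≤ T^2 * ∑ k ∈ Finset.range (lev+1), ‖NV f k x‖ :=
            mul_le_mul_of_nonneg_left hsumge (sq_nonneg T)
  | add h₁ h₂ ih₁ ih₂ =>
    rename_i d w₁ w₂ ρ₁ ρ₂
    intro x hx
    obtain ⟨a₁, b₁⟩ := ih₁ x hx
    obtain ⟨a₂, b₂⟩ := ih₂ x hx
    constructor
    · calc |ρ₁ x + ρ₂ x| ≤ |ρ₁ x| + |ρ₂ x| := abs_add_le _ _
        _ ≤ w₁ + w₂ := add_le_add a₁ a₂
    · calc T * |ρ₁ x + ρ₂ x| ≤ T * (|ρ₁ x| + |ρ₂ x|) :=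
          mul_le_mul_of_nonneg_left (abs_add_le _ _) hT0
        _ = T * |ρ₁ x| + T * |ρ₂ x| := by ring
        _ ≤ w₁ * (∑ k ∈ Finset.range (lev+1), ‖NV f k x‖)
            + w₂ * (∑ k ∈ Finset.range (lev+1), ‖NV f k x‖) := add_le_add b₁ b₂
        _ = (w₁ + w₂) * (∑ k ∈ Finset.range (lev+1), ‖NV f k x‖) := by ring
  | neg h ih =>
    intro x hx
    obtain ⟨a, b⟩ := ih x hx
    refine ⟨by rwa [abs_neg], by rwa [abs_neg]⟩
  | mulbase i j hi hj h ih =>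
    rename_i d w ρ
    intro x hx
    obtain ⟨a, b⟩ := ih x hx
    have h1 := abs_real_inner_le_norm (NV f i x) (NV f j x)
    have h2 := hsup i hi x hx
    have h3 := hsup j hj x hx
    have hq : |⟪NV f i x, NV f j x⟫| ≤ T^2 := by
      calc |⟪NV f i x, NV f j x⟫| ≤ ‖NV f i x‖ * ‖NV f j x‖ := h1
        _ ≤ T * T := mul_le_mul h2 h3 (norm_nonneg _) hT0
        _ = T^2 := by ring
    have hw := h.w_nonneg hT0
    have hsum0 : (0:ℝ) ≤ ∑ k ∈ Finset.range (lev+1), ‖NV f k x‖ :=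
      Finset.sum_nonneg (fun k _ => norm_nonneg _)
    constructor
    · show |⟪NV f i x, NV f j x⟫ * ρ x| ≤ T^2 * w
      rw [abs_mul]
      exact mul_le_mul hq a (abs_nonneg _) (sq_nonneg T)
    · show T * |⟪NV f i x, NV f j x⟫ * ρ x| ≤ T^2 * w * ∑ k ∈ Finset.range (lev+1), ‖NV f k x‖
      rw [abs_mul]
      calc T * (|⟪NV f i x, NV f j x⟫| * |ρ x|)
          = |⟪NV f i x, NV f j x⟫| * (T * |ρ x|) := by ring
        _ ≤ T^2 * (w * ∑ k ∈ Finset.range (lev+1), ‖NV f k x‖) :=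
            mul_le_mul hq b (by positivity) (sq_nonneg T)
        _ = T^2 * w * ∑ k ∈ Finset.range (lev+1), ‖NV f k x‖ := by ring

lemma continuousOn (hf : Reg f) {l d w ρ} (h : PolW f T l d w ρ) :
    ContinuousOn ρ (Set.Icc (0:ℝ) 1) := by
  induction h with
  | zero d => exact continuousOn_const
  | base d i j hi hj => exact (hf.continuousOn_NV i).inner (hf.continuousOn_NV j)
  | add h₁ h₂ ih₁ ih₂ => exact ih₁.add ih₂
  | neg h ih => exact ih.neg
  | mulbase i j hi hj h ih => exact ((hf.continuousOn_NV i).inner (hf.continuousOn_NV j)).mul ih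

end PolW


-- ==================== structure theorem ====================

def Wq (T : ℝ) (m : ℕ) (l : ℕ) : ℝ := ((2*(m:ℝ)+4)*(T^2+1))^l

lemma Qc_ge_one {T : ℝ} (m : ℕ) : 1 ≤ (2*(m:ℝ)+4)*(T^2+1) := by
  have := Nat.cast_nonneg (α := ℝ) m
  nlinarith [sq_nonneg T]

lemma Wq_ge_one {T : ℝ} (m l : ℕ) : 1 ≤ Wq T m l := one_le_pow₀ (Qc_ge_one m)

lemma Wq_nonneg {T : ℝ} (m l : ℕ) : 0 ≤ Wq T m l := le_trans zero_le_one (Wq_ge_one m l)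

lemma Wq_succ {T : ℝ} (m l : ℕ) : Wq T m (l+1) = Wq T m l * ((2*(m:ℝ)+4)*(T^2+1)) := pow_succ _ _

theorem structure_thm {f : ℝ → En n} (hf : Reg f) {T : ℝ} (hT0 : 0 ≤ T) (m : ℕ) :
    ∀ l, 1 ≤ l → l ≤ m →
    ∃ (ρ : ℝ → ℝ) (σ : ℕ → ℝ → ℝ) (wρ : ℝ) (wσ : ℕ → ℝ),
      PolW f T (l-1) (l-1) wρ ρ ∧ (∀ j, PolW f T (l-1) (l-1) (wσ j) (σ j)) ∧
      wρ ≤ Wq T m l ∧ (∀ j, wσ j ≤ Wq T m l) ∧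
      ∀ x ∈ US f, aDIter f l (curv f) x = NV f l x + ρ x • tang f x +
        ∑ j ∈ Finset.range l, σ j x • NV f j x := by
  intro l
  induction l with
  | zero => intro h; omega
  | succ k ih =>
  intro _ hk1m
  rcases Nat.eq_zero_or_pos k with rfl | hkpos
  · -- base case l = 1
    refine ⟨fun x => -(⟪NV f 0 x, NV f 0 x⟫), fun _ _ => 0, T^2, fun _ => 0,
      PolW.neg (PolW.base 0 0 0 0 (le_refl 0) (le_refl 0)),
      fun j => PolW.zero 0 0, ?_, ?_, ?_⟩
    · have h := Qc_ge_one (T := T) m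
      have := Nat.cast_nonneg (α := ℝ) m
      simp only [Wq, zero_add, pow_one]
      nlinarith [sq_nonneg T]
    · intro j; exact Wq_nonneg m 1
    · intro x hx
      have h1 : aDIter f 1 (curv f) x = aD f (NV f 0) x := rfl
      rw [h1, hf.aD_NV_eq 0 hx]
      simp only [Finset.range_one, Finset.sum_singleton, zero_smul, add_zero, zero_add]
      module
  · -- inductive step: k ≥ 1, so use ih for l = k and produce l = k+1
    obtain ⟨ρ, σ, wρ, wσ, hPρ, hPσ, hwρ, hwσ, hform⟩ := ih hkpos (by omega)
    have hk1 : k - 1 + 1 = k := by omega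
    obtain ⟨wρ', ρ', hPρ', hbρ', hDρ⟩ := hPρ.hasDeriv hf hT0
    choose wσ' σ' hPσ' hbσ' hDσ using fun j => (hPσ j).hasDeriv hf hT0
    rw [hk1] at hPρ' hPσ'
    simp only [Nat.add_sub_cancel]
    have hcast : ((k-1 : ℕ):ℝ) + 1 = (k:ℝ) := by
      rw [Nat.cast_sub hkpos]; push_cast; ring
    rw [hcast] at hbρ' hbσ'
    have hW1 : (1:ℝ) ≤ Wq T m k := Wq_ge_one m k
    have hW0 : (0:ℝ) ≤ Wq T m k := Wq_nonneg m k
    have hkm : (k:ℝ) + 1 ≤ (m:ℝ) := by exact_mod_cast hk1m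
    have hk0 : (0:ℝ) ≤ (k:ℝ) := Nat.cast_nonneg k
    set ρn : ℝ → ℝ := fun x => (-(⟪NV f k x, NV f 0 x⟫) + ρ' x)
      + ∑ j ∈ Finset.range k, -(⟪NV f j x, NV f 0 x⟫ * σ j x) with hρndef
    set σn : ℕ → ℝ → ℝ := fun j x => (if j < k then σ' j x else 0)
      + (if j = 0 then ρ x else if j ≤ k then σ (j-1) x else 0) with hσndef
    set wρn : ℝ := (T^2 + wρ') + ∑ j ∈ Finset.range k, T^2 * wσ j with hwρndef
    set wσn : ℕ → ℝ := fun j => (if j < k then wσ' j else 0)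
      + (if j = 0 then wρ else if j ≤ k then wσ (j-1) else 0) with hwσndef
    have hwσ0 : ∀ j, 0 ≤ wσ j := fun j => (hPσ j).w_nonneg hT0
    have hwρ0 : 0 ≤ wρ := hPρ.w_nonneg hT0
    have hwσ'0 : ∀ j, 0 ≤ wσ' j := fun j => (hPσ' j).w_nonneg hT0
    have hwρ'0 : 0 ≤ wρ' := hPρ'.w_nonneg hT0
    refine ⟨ρn, σn, wρn, wσn, ?_, ?_, ?_, ?_, ?_⟩
    · -- PolW for ρn
      apply PolW.add
      · apply PolW.add
        · exact PolW.neg (PolW.base k k k 0 (le_refl k) (Nat.zero_le k))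
        · exact hPρ'.mono (le_refl k) (by omega)
      · apply PolW.sum
        intro j hj
        have hjk := Finset.mem_range.mp hj
        exact PolW.neg (PolW.mulbase j 0 (by omega) (Nat.zero_le k)
          (((hPσ j).mono (by omega) (le_refl (k-1))).mono (le_refl k) (le_refl (k-1)))
          |>.mono (le_refl k) (by omega))
    · -- PolW for σn
      intro j
      apply PolW.add
      · by_cases hjk : j < k
        · simp only [if_pos hjk]
          exact (hPσ' j).mono (le_refl k) (by omega)
        · simp only [if_neg hjk]
          exact PolW.zero k k
      · by_cases hj0 : j = 0
        · simp only [if_pos hj0]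
          exact hPρ.mono (by omega) (by omega)
        · simp only [if_neg hj0]
          by_cases hjk : j ≤ k
          · simp only [if_pos hjk]
            exact (hPσ (j-1)).mono (by omega) (by omega)
          · simp only [if_neg hjk]
            exact PolW.zero k k
    · -- weight bound for ρn
      have e1 : T^2 ≤ T^2 * Wq T m k := by nlinarith [sq_nonneg T, hW1]
      have e2 : wρ' ≤ 2*(k:ℝ)*Wq T m k := by
        have h := mul_le_mul_of_nonneg_left hwρ
          (show (0:ℝ) ≤ 2*(k:ℝ) by positivity)
        calc wρ' ≤ 2*((k:ℝ))*wρ := by linarith [hbρ']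
          _ ≤ 2*(k:ℝ)*Wq T m k := by linarith [h]
      have e3 : ∑ j ∈ Finset.range k, T^2 * wσ j ≤ (k:ℝ)*(T^2*Wq T m k) := by
        calc ∑ j ∈ Finset.range k, T^2 * wσ j
            ≤ ∑ _j ∈ Finset.range k, T^2 * Wq T m k :=
              Finset.sum_le_sum (fun j _ =>
                mul_le_mul_of_nonneg_left (hwσ j) (sq_nonneg T))
          _ = (k:ℝ)*(T^2*Wq T m k) := by
              rw [Finset.sum_const, Finset.card_range, nsmul_eq_mul]
      have hscal : T^2 + 2*(k:ℝ) + (k:ℝ)*T^2 ≤ (2*(m:ℝ)+4)*(T^2+1) := by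
        nlinarith [mul_le_mul_of_nonneg_right (show (k:ℝ) ≤ (m:ℝ) by linarith)
          (sq_nonneg T), sq_nonneg T]
      calc wρn ≤ T^2*Wq T m k + 2*(k:ℝ)*Wq T m k + (k:ℝ)*(T^2*Wq T m k) := by
            rw [hwρndef]; linarith [e1, e2, e3]
        _ = (T^2 + 2*(k:ℝ) + (k:ℝ)*T^2) * Wq T m k := by ring
        _ ≤ ((2*(m:ℝ)+4)*(T^2+1)) * Wq T m k :=
            mul_le_mul_of_nonneg_right hscal hW0
        _ = Wq T m (k+1) := by rw [Wq_succ]; ring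
    · -- weight bound for σn
      intro j
      have e1 : (if j < k then wσ' j else 0) ≤ 2*(k:ℝ)*Wq T m k := by
        by_cases hjk : j < k
        · simp only [if_pos hjk]
          calc wσ' j ≤ 2*((k:ℝ))*wσ j := by linarith [hbσ' j]
            _ ≤ 2*(k:ℝ)*Wq T m k := by
                have h := mul_le_mul_of_nonneg_left (hwσ j)
                  (show (0:ℝ) ≤ 2*(k:ℝ) by positivity)
                linarith
        · simp only [if_neg hjk]; positivity
      have e2 : (if j = 0 then wρ else if j ≤ k then wσ (j-1) else 0) ≤ Wq T m k := by
        by_cases hj0 : j = 0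
        · simp only [if_pos hj0]; exact hwρ
        · simp only [if_neg hj0]
          by_cases hjk : j ≤ k
          · simp only [if_pos hjk]; exact hwσ (j-1)
          · simp only [if_neg hjk]; linarith
      have hscal : 2*(k:ℝ) + 1 ≤ (2*(m:ℝ)+4)*(T^2+1) := by
        nlinarith [sq_nonneg T, hkm]
      calc wσn j ≤ 2*(k:ℝ)*Wq T m k + Wq T m k := by
            rw [hwσndef]; exact add_le_add e1 e2
        _ = (2*(k:ℝ) + 1) * Wq T m k := by ring
        _ ≤ ((2*(m:ℝ)+4)*(T^2+1)) * Wq T m k :=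
            mul_le_mul_of_nonneg_right hscal hW0
        _ = Wq T m (k+1) := by rw [Wq_succ]; ring
    · -- the formula
      intro x hx
      have hune : uu f x ≠ 0 := (hf.uu_pos hx).ne'
      have hcurvNV : curv f = NV f 0 := rfl
      have hD1 : HasDerivAt (NV f k)
          (uu f x • NV f (k+1) x - (uu f x * ⟪NV f k x, NV f 0 x⟫) • tang f x) x :=
        hf.hasDerivAt_NV k hx
      have hD2 : HasDerivAt (fun y => ρ y • tang f y)
          (ρ x • (uu f x • NV f 0 x) + (uu f x * ρ' x) • tang f x) x := by
        have h := (hDρ x hx).smul (hf.hasDerivAt_tang hx)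
        rwa [hcurvNV] at h
      have hD3 : HasDerivAt (fun y => ∑ j ∈ Finset.range k, σ j y • NV f j y)
          (∑ j ∈ Finset.range k, (σ j x • (uu f x • NV f (j+1) x
            - (uu f x * ⟪NV f j x, NV f 0 x⟫) • tang f x) + (uu f x * σ' j x) • NV f j x)) x :=
        HasDerivAt.fun_sum (fun j _ => (hDσ j x hx).smul (hf.hasDerivAt_NV j hx))
      have hΦ := (hD1.fun_add hD2).fun_add hD3
      have hev : aDIter f k (curv f) =ᶠ[nhds x]
          (fun y => NV f k y + ρ y • tang f y + ∑ j ∈ Finset.range k, σ j y • NV f j y) :=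
        Filter.eventuallyEq_of_mem (hf.isOpen_US.mem_nhds hx) hform
      have hstepval : aDIter f (k+1) (curv f) x
          = (uu f x)⁻¹ • deriv (aDIter f k (curv f)) x := rfl
      rw [hstepval, hev.deriv_eq, hΦ.deriv, inv_smul_eq_iff₀ hune]
      -- canonical sums
      set SA : En n := ∑ j ∈ Finset.range k, (uu f x * σ' j x) • NV f j x with hSA
      set SB : En n := ∑ j ∈ Finset.range k, (uu f x * σ j x) • NV f (j+1) x with hSB
      set SC : En n := ∑ j ∈ Finset.range k,
        (uu f x * (⟪NV f j x, NV f 0 x⟫ * σ j x)) • tang f x with hSC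
      have hD3eq : (∑ j ∈ Finset.range k, (σ j x • (uu f x • NV f (j+1) x
            - (uu f x * ⟪NV f j x, NV f 0 x⟫) • tang f x) + (uu f x * σ' j x) • NV f j x))
          = SB + SA - SC := by
        rw [hSB, hSA, hSC, ← Finset.sum_add_distrib, ← Finset.sum_sub_distrib]
        apply Finset.sum_congr rfl
        intro j _
        module
      have hRρ : uu f x • (ρn x • tang f x)
          = (uu f x * ρ' x) • tang f x
            - (uu f x * ⟪NV f k x, NV f 0 x⟫) • tang f x - SC := by
        rw [smul_smul, hρndef, hSC]
        simp only [mul_add, add_smul, mul_neg, neg_smul, Finset.mul_sum]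
        rw [Finset.sum_smul]
        simp only [neg_smul]
        rw [Finset.sum_neg_distrib]
        abel
      have hRS : uu f x • (∑ j ∈ Finset.range (k+1), σn j x • NV f j x)
          = SA + (SB + (uu f x * ρ x) • NV f 0 x) := by
        rw [Finset.smul_sum]
        have hterm : ∀ j, uu f x • (σn j x • NV f j x)
            = (uu f x * (if j < k then σ' j x else 0)) • NV f j x
              + (uu f x * (if j = 0 then ρ x else if j ≤ k then σ (j-1) x else 0)) • NV f j x := by
          intro j
          rw [hσndef, smul_smul, mul_add, add_smul]
        rw [Finset.sum_congr rfl (fun j _ => hterm j), Finset.sum_add_distrib]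
        congr 1
        · rw [hSA, Finset.sum_range_succ, if_neg (lt_irrefl k), mul_zero, zero_smul, add_zero]
          apply Finset.sum_congr rfl
          intro j hj
          rw [if_pos (Finset.mem_range.mp hj)]
        · rw [Finset.sum_range_succ']
          rw [hSB]
          congr 1
          apply Finset.sum_congr rfl
          intro i hi
          rw [if_neg (Nat.succ_ne_zero i), if_pos (show i+1 ≤ k from Finset.mem_range.mp hi),
            Nat.add_sub_cancel]
      rw [smul_add, smul_add, hRρ, hRS, hD3eq]
      module


-- ==================== main theorem ====================


theorem full_derivative_bound' (n m : ℕ) (hn : 2 ≤ n) (hm : 1 ≤ m)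
    (Λ C₀ : ℝ) (hΛ : 0 < Λ) (hC₀ : 0 < C₀) :
    ∃ C : ℝ, 0 < C ∧
      ∀ f : ℝ → En n, ContDiff ℝ (⊤ : ℕ∞) f →
        (∀ x ∈ Set.Icc (0:ℝ) 1, deriv f x ≠ 0) →
        Λ ≤ len f →
        (∫ x in (0:ℝ)..1, ‖curv f x‖ ^ 2 * ‖deriv f x‖) ^ ((1:ℝ)/2) ≤ C₀ →
        (∫ x in (0:ℝ)..1, ‖nSIter f m (curv f) x‖ ^ 2 * ‖deriv f x‖) ^ ((1:ℝ)/2) ≤ C₀ →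
        ∀ l : ℕ, l ≤ m →
          (∫ x in (0:ℝ)..1, ‖aDIter f l (curv f) x‖ ^ 2 * ‖deriv f x‖) ^ ((1:ℝ)/2) ≤ C := by
  have hK := Kc_ge_one hΛ
  have heps := epsf_pos hK m
  set C₁ : ℝ := (epsf (Kc Λ) m)⁻¹ * (2 * C₀) with hC₁def
  have hC₁pos : 0 < C₁ := by positivity
  set S : ℝ := Real.sqrt (C₁^2/Λ + 2*(C₁*C₁)) with hSdef
  set T : ℝ := max S 1 with hTdef
  have hT1 : (1:ℝ) ≤ T := le_max_right _ _
  have hT0 : (0:ℝ) ≤ T := by linarith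
  set D : ℝ := 1 + 2 * Wq T m m with hDdef
  have hD1 : (1:ℝ) ≤ D := by
    have := Wq_nonneg (T := T) m m; simp only [hDdef]; linarith
  have hD0 : (0:ℝ) ≤ D := by linarith
  set C : ℝ := ((m:ℝ)+1) * (D * C₁) + C₀ + 1 with hCdef
  have hCpos : 0 < C := by
    have hm0 : (0:ℝ) ≤ (m:ℝ) := Nat.cast_nonneg m
    have : (0:ℝ) ≤ ((m:ℝ)+1) * (D * C₁) := by positivity
    simp only [hCdef]; linarith
  refine ⟨C, hCpos, ?_⟩
  intro f hsm hreg hlen h0 hm'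
  have hf : Reg f := ⟨hsm, hreg⟩
  have h0' : Real.sqrt (EE f 0) ≤ C₀ := by
    rw [Real.sqrt_eq_rpow]; exact h0
  have hm'' : Real.sqrt (EE f m) ≤ C₀ := by
    rw [Real.sqrt_eq_rpow]; exact hm'
  have hEE : ∀ j ≤ m, Real.sqrt (EE f j) ≤ C₁ := EE_all hf hΛ hlen m h0' hm''
  have hEEsq : ∀ j ≤ m, EE f j ≤ C₁^2 := by
    intro j hj
    have h := pow_le_pow_left₀ (Real.sqrt_nonneg (EE f j)) (hEE j hj) 2
    rwa [Real.sq_sqrt (EE_nonneg f j)] at h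
  -- sup bounds
  have hsup : ∀ j, j + 1 ≤ m → ∀ x ∈ Set.Icc (0:ℝ) 1, ‖NV f j x‖ ≤ T := by
    intro j hj x hx
    have hag := agmon hf hΛ hlen j x hx
    have h1 : EE f j / Λ ≤ C₁^2 / Λ := by
      gcongr
      exact hEEsq j (by omega)
    have h2 : Real.sqrt (EE f j) * Real.sqrt (EE f (j+1)) ≤ C₁ * C₁ :=
      mul_le_mul (hEE j (by omega)) (hEE (j+1) hj) (Real.sqrt_nonneg _) hC₁pos.le
    have h3 : ‖NV f j x‖^2 ≤ C₁^2/Λ + 2*(C₁*C₁) := by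
      calc ‖NV f j x‖^2 ≤ EE f j / Λ + 2*(Real.sqrt (EE f j) * Real.sqrt (EE f (j+1))) := hag
        _ ≤ C₁^2/Λ + 2*(C₁*C₁) := by linarith
    have h4 := Real.sqrt_le_sqrt h3
    rw [Real.sqrt_sq (norm_nonneg _)] at h4
    calc ‖NV f j x‖ ≤ S := h4
      _ ≤ T := le_max_left _ _
  -- main estimate
  intro l hlm
  rcases Nat.eq_zero_or_pos l with rfl | hlpos
  · have hz : aDIter f 0 (curv f) = curv f := rfl
    rw [hz]
    calc (∫ x in (0:ℝ)..1, ‖curv f x‖ ^ 2 * ‖deriv f x‖) ^ ((1:ℝ)/2) ≤ C₀ := h0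
      _ ≤ C := by
        have : (0:ℝ) ≤ ((m:ℝ)+1) * (D * C₁) := by positivity
        simp only [hCdef]; linarith
  · obtain ⟨ρ, σ, wρ, wσ, hPρ, hPσ, hwρ, hwσ, hform⟩ :=
      structure_thm hf hT0 m l hlpos hlm
    have hl1 : l - 1 + 1 = l := by omega
    have hsup' : ∀ j, j ≤ l - 1 → ∀ x ∈ Set.Icc (0:ℝ) 1, ‖NV f j x‖ ≤ T := by
      intro j hj x hx
      exact hsup j (by omega) x hx
    have hWm : Wq T m l ≤ Wq T m m :=
      pow_le_pow_right₀ (Qc_ge_one m) hlm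
    set G : ℝ → ℝ := fun x => ∑ j ∈ Finset.range (m+1), ‖NV f j x‖ with hGdef
    have hG0 : ∀ x, 0 ≤ G x := fun x => Finset.sum_nonneg (fun j _ => norm_nonneg _)
    have hGcont : ContinuousOn G (Set.Icc (0:ℝ) 1) := by
      apply continuousOn_finset_sum
      intro j _
      exact (hf.continuousOn_NV j).norm
    -- pointwise bound
    have hpt : ∀ x ∈ Set.Icc (0:ℝ) 1, ‖aDIter f l (curv f) x‖ ≤ D * G x := by
      intro x hx
      have hxU := hf.icc_subset hx
      have hsubG : ∑ j ∈ Finset.range l, ‖NV f j x‖ ≤ G x := by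
        apply Finset.sum_le_sum_of_subset_of_nonneg
        · exact Finset.range_subset_range.mpr (by omega)
        · intro j _ _; exact norm_nonneg _
      obtain ⟨hb1, hb2⟩ := hPρ.bound hf hT1 hsup' x hx
      rw [hl1] at hb2
      have hρb : |ρ x| ≤ Wq T m m * G x := by
        have hTabs : |ρ x| ≤ T * |ρ x| := by nlinarith [abs_nonneg (ρ x)]
        calc |ρ x| ≤ T * |ρ x| := hTabs
          _ ≤ wρ * (∑ j ∈ Finset.range l, ‖NV f j x‖) := hb2
          _ ≤ Wq T m m * G x :=
              mul_le_mul (hwρ.trans hWm) hsubG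
                (Finset.sum_nonneg (fun j _ => norm_nonneg _)) (Wq_nonneg m m)
      have hσb : ∀ j, |σ j x| ≤ Wq T m m :=
        fun j => ((hPσ j).bound hf hT1 hsup' x hx).1.trans ((hwσ j).trans hWm)
      have hnorml : ‖NV f l x‖ ≤ G x := by
        apply Finset.single_le_sum (f := fun j => ‖NV f j x‖) (fun j _ => norm_nonneg _)
        exact Finset.mem_range.mpr (by omega)
      have hsum : ‖∑ j ∈ Finset.range l, σ j x • NV f j x‖ ≤ Wq T m m * G x := by
        calc ‖∑ j ∈ Finset.range l, σ j x • NV f j x‖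
            ≤ ∑ j ∈ Finset.range l, ‖σ j x • NV f j x‖ := norm_sum_le _ _
          _ = ∑ j ∈ Finset.range l, |σ j x| * ‖NV f j x‖ := by
              apply Finset.sum_congr rfl
              intro j _
              rw [norm_smul, Real.norm_eq_abs]
          _ ≤ ∑ j ∈ Finset.range l, Wq T m m * ‖NV f j x‖ :=
              Finset.sum_le_sum (fun j _ =>
                mul_le_mul_of_nonneg_right (hσb j) (norm_nonneg _))
          _ = Wq T m m * ∑ j ∈ Finset.range l, ‖NV f j x‖ := by
              rw [Finset.mul_sum]
          _ ≤ Wq T m m * G x :=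
              mul_le_mul_of_nonneg_left hsubG (Wq_nonneg m m)
      calc ‖aDIter f l (curv f) x‖
          = ‖NV f l x + ρ x • tang f x + ∑ j ∈ Finset.range l, σ j x • NV f j x‖ := by
            rw [hform x hxU]
        _ ≤ ‖NV f l x + ρ x • tang f x‖ + ‖∑ j ∈ Finset.range l, σ j x • NV f j x‖ :=
            norm_add_le _ _
        _ ≤ ‖NV f l x‖ + ‖ρ x • tang f x‖ + ‖∑ j ∈ Finset.range l, σ j x • NV f j x‖ := by
            linarith [norm_add_le (NV f l x) (ρ x • tang f x)]
        _ ≤ G x + Wq T m m * G x + Wq T m m * G x := by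
            have : ‖ρ x • tang f x‖ = |ρ x| := by
              rw [norm_smul, Real.norm_eq_abs, hf.norm_tang hxU, mul_one]
            rw [this]
            linarith [hρb, hsum, hnorml]
        _ = D * G x := by rw [hDdef]; ring
    -- integral bound
    have hcontF : ContinuousOn (fun x => ‖aDIter f l (curv f) x‖^2 * uu f x)
        (Set.Icc (0:ℝ) 1) :=
      ((hf.continuousOn_F l).norm.pow 2).mul hf.continuous_uu.continuousOn
    have hcontG : ContinuousOn (fun x => (D * G x)^2 * uu f x) (Set.Icc (0:ℝ) 1) :=
      (((continuousOn_const).mul hGcont).pow 2).mul hf.continuous_uu.continuousOn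
    have hint1 : (∫ x in (0:ℝ)..1, ‖aDIter f l (curv f) x‖^2 * uu f x)
        ≤ ∫ x in (0:ℝ)..1, (D * G x)^2 * uu f x := by
      apply intervalIntegral.integral_mono_on (by norm_num) (intInt hcontF) (intInt hcontG)
      intro x hx
      apply mul_le_mul_of_nonneg_right _ (hf.uu_nonneg x)
      have h := hpt x hx
      nlinarith [norm_nonneg (aDIter f l (curv f) x), hG0 x, hD0]
    have hint2 : (∫ x in (0:ℝ)..1, (D * G x)^2 * uu f x)
        ≤ D^2 * (((m:ℝ)+1) * (((m:ℝ)+1) * C₁^2)) := by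
      have hptG : ∀ x ∈ Set.Icc (0:ℝ) 1,
          (D * G x)^2 * uu f x ≤ D^2 * (((m:ℝ)+1) * (∑ j ∈ Finset.range (m+1), ‖NV f j x‖^2 * uu f x)) := by
        intro x hx
        have hGsq : (G x)^2 ≤ ((m:ℝ)+1) * ∑ j ∈ Finset.range (m+1), ‖NV f j x‖^2 := by
          have h := sq_sum_le_card_mul_sum_sq
            (s := Finset.range (m+1)) (f := fun j => ‖NV f j x‖)
          rw [Finset.card_range] at h
          push_cast at h
          exact h
        have h1 : (D * G x)^2 = D^2 * (G x)^2 := by ring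
        rw [h1]
        calc D^2 * (G x)^2 * uu f x
            ≤ D^2 * (((m:ℝ)+1) * ∑ j ∈ Finset.range (m+1), ‖NV f j x‖^2) * uu f x := by
              apply mul_le_mul_of_nonneg_right _ (hf.uu_nonneg x)
              exact mul_le_mul_of_nonneg_left hGsq (sq_nonneg D)
          _ = D^2 * (((m:ℝ)+1) * (∑ j ∈ Finset.range (m+1), ‖NV f j x‖^2 * uu f x)) := by
              rw [← Finset.sum_mul]; ring
      calc (∫ x in (0:ℝ)..1, (D * G x)^2 * uu f x)
          ≤ ∫ x in (0:ℝ)..1, D^2 * (((m:ℝ)+1) * (∑ j ∈ Finset.range (m+1), ‖NV f j x‖^2 * uu f x)) := by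
            apply intervalIntegral.integral_mono_on (by norm_num) (intInt hcontG)
            · apply intInt
              apply ContinuousOn.mul continuousOn_const
              apply ContinuousOn.mul continuousOn_const
              apply continuousOn_finset_sum
              intro j _
              exact ((hf.continuousOn_NV j).norm.pow 2).mul hf.continuous_uu.continuousOn
            · exact hptG
        _ = D^2 * (((m:ℝ)+1) * (∑ j ∈ Finset.range (m+1), ∫ x in (0:ℝ)..1, ‖NV f j x‖^2 * uu f x)) := by
            rw [intervalIntegral.integral_const_mul, intervalIntegral.integral_const_mul,
              intervalIntegral.integral_finset_sum]
            intro j _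
            exact intInt (((hf.continuousOn_NV j).norm.pow 2).mul hf.continuous_uu.continuousOn)
        _ ≤ D^2 * (((m:ℝ)+1) * (((m:ℝ)+1) * C₁^2)) := by
            apply mul_le_mul_of_nonneg_left _ (sq_nonneg D)
            apply mul_le_mul_of_nonneg_left _ (by positivity)
            calc (∑ j ∈ Finset.range (m+1), ∫ x in (0:ℝ)..1, ‖NV f j x‖^2 * uu f x)
                ≤ ∑ _j ∈ Finset.range (m+1), C₁^2 := by
                  apply Finset.sum_le_sum
                  intro j hj
                  exact hEEsq j (Nat.lt_succ_iff.mp (Finset.mem_range.mp hj))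
              _ = ((m:ℝ)+1) * C₁^2 := by
                  rw [Finset.sum_const, Finset.card_range, nsmul_eq_mul]; push_cast; ring
    have hfinal : (∫ x in (0:ℝ)..1, ‖aDIter f l (curv f) x‖^2 * uu f x)
        ≤ (((m:ℝ)+1) * (D * C₁))^2 := by
      calc (∫ x in (0:ℝ)..1, ‖aDIter f l (curv f) x‖^2 * uu f x)
          ≤ D^2 * (((m:ℝ)+1) * (((m:ℝ)+1) * C₁^2)) := le_trans hint1 hint2
        _ = (((m:ℝ)+1) * (D * C₁))^2 := by ring
    show (∫ x in (0:ℝ)..1, ‖aDIter f l (curv f) x‖^2 * uu f x) ^ ((1:ℝ)/2) ≤ C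
    rw [← Real.sqrt_eq_rpow]
    have h := Real.sqrt_le_sqrt hfinal
    rw [Real.sqrt_sq (by positivity)] at h
    calc Real.sqrt (∫ x in (0:ℝ)..1, ‖aDIter f l (curv f) x‖^2 * uu f x)
        ≤ ((m:ℝ)+1) * (D * C₁) := h
      _ ≤ C := by simp only [hCdef]; linarith



/-- Control of the full arc-length derivatives of the curvature by the normal ones:
if `L[f] ≥ Λ`, `‖κ‖_{L²} ≤ C₀` and `‖∇ₛᵐκ‖_{L²} ≤ C₀`, then `‖∂ₛˡκ‖_{L²} ≤ C`
for all `0 ≤ l ≤ m`, with `C = C(n,m,Λ,C₀)`. -/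
theorem full_derivative_bound (n m : ℕ) (hn : 2 ≤ n) (hm : 1 ≤ m)
    (Λ C₀ : ℝ) (hΛ : 0 < Λ) (hC₀ : 0 < C₀) :
    ∃ C : ℝ, 0 < C ∧
      ∀ f : ℝ → En n, ContDiff ℝ (⊤ : ℕ∞) f →
        (∀ x ∈ Set.Icc (0:ℝ) 1, deriv f x ≠ 0) →
        Λ ≤ len f →
        (∫ x in (0:ℝ)..1, ‖curv f x‖ ^ 2 * ‖deriv f x‖) ^ ((1:ℝ)/2) ≤ C₀ →
        (∫ x in (0:ℝ)..1, ‖nSIter f m (curv f) x‖ ^ 2 * ‖deriv f x‖) ^ ((1:ℝ)/2) ≤ C₀ →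
        ∀ l : ℕ, l ≤ m →
          (∫ x in (0:ℝ)..1, ‖aDIter f l (curv f) x‖ ^ 2 * ‖deriv f x‖) ^ ((1:ℝ)/2) ≤ C :=
  full_derivative_bound' n m hn hm Λ C₀ hΛ hC₀

end
end
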